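/- arXiv:0907.3801 — 3 statements merged into one kernel-verified Lean document; each statement's English description precedes it below -/
import Mathlib

section
/- For all integers m, n ≥ 3, the incidence chromatic number of the toroidal grid T_{m,n} = C_m □ C_n is at most 6 (in particular, toroidal grids satisfy the Incidence Coloring Conjecture bound Δ + 2). -/
open SimpleGraph

/-- The type of incidences of a graph `G`: pairs `(v, e)` where `e` is an edge of `G`
incident to the vertex `v`. -/
def Incidence {V : Type*} (G : SimpleGraph V) : Type _ :=
  {p : V × Sym2 V // p.2 ∈ G.edgeSet ∧ p.1 ∈ p.2}

/-- The graph on the incidences of `G` in which two distinct incidences `(v,e)` and `(w,f)`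
are adjacent iff `v = w`, or `e = f`, or the edge `vw` equals `e` or `f`. -/
def incidenceGraph {V : Type*} (G : SimpleGraph V) : SimpleGraph (Incidence G) where
  Adj i j := i ≠ j ∧
    (i.1.1 = j.1.1 ∨ i.1.2 = j.1.2 ∨ s(i.1.1, j.1.1) = i.1.2 ∨ s(i.1.1, j.1.1) = j.1.2)
  symm := ⟨by
    rintro ⟨⟨v, e⟩, hi⟩ ⟨⟨w, f⟩, hj⟩ ⟨hne, h⟩
    refine ⟨fun h' => hne h'.symm, ?_⟩
    simp only at h ⊢
    rcases h with h | h | h | h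
    · exact Or.inl h.symm
    · exact Or.inr (Or.inl h.symm)
    · exact Or.inr (Or.inr (Or.inr ((Sym2.eq_swap).trans h)))
    · exact Or.inr (Or.inr (Or.inl ((Sym2.eq_swap).trans h)))⟩
  loopless := ⟨fun i h => h.1 rfl⟩

/-- The incidence chromatic number of a graph: the least number of colors in a proper
coloring of its incidences. -/
noncomputable def incidenceChromaticNumber {V : Type*} (G : SimpleGraph V) : ℕ∞ :=
  (incidenceGraph G).chromaticNumber

/-- The square of a graph `G`: distinct vertices are adjacent iff they are at distance
at most 2 in `G`. -/
def SimpleGraph.square {V : Type*} (G : SimpleGraph V) : SimpleGraph V where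
  Adj u v := u ≠ v ∧ (G.Adj u v ∨ ∃ w, G.Adj u w ∧ G.Adj w v)
  symm := ⟨by
    rintro u v ⟨hne, h | ⟨w, h1, h2⟩⟩
    · exact ⟨hne.symm, Or.inl h.symm⟩
    · exact ⟨hne.symm, Or.inr ⟨w, h2.symm, h1.symm⟩⟩⟩
  loopless := ⟨fun v h => h.1 rfl⟩

/-- The toroidal grid `T_{m,n} = C_m □ C_n`. -/
def toroidalGrid (m n : ℕ) : SimpleGraph (Fin m × Fin n) :=
  SimpleGraph.boxProd (SimpleGraph.cycleGraph m) (SimpleGraph.cycleGraph n)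

namespace IncAux

open Fin.CommRing Fin.NatCast

def tab : ℕ → ℕ → ℕ → ℕ → ℕ → ℕ → ℕ → Fin 6
  | 0, 0, 1, 2, 0, 1, 2 => 1
  | 0, 0, 1, 2, 1, 2, 0 => 5
  | 0, 0, 1, 2, 1, 2, 3 => 5
  | 0, 0, 1, 2, 2, 0, 1 => 2
  | 0, 0, 1, 2, 2, 3, 0 => 3
  | 0, 0, 1, 2, 2, 3, 4 => 3
  | 0, 0, 1, 2, 3, 0, 1 => 2
  | 0, 0, 1, 2, 3, 4, 0 => 4
  | 0, 0, 1, 2, 4, 0, 1 => 2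
  | 0, 1, 2, 0, 0, 1, 2 => 3
  | 0, 1, 2, 0, 1, 2, 0 => 1
  | 0, 1, 2, 0, 1, 2, 3 => 0
  | 0, 1, 2, 0, 2, 0, 1 => 5
  | 0, 1, 2, 0, 2, 3, 0 => 5
  | 0, 1, 2, 0, 2, 3, 4 => 5
  | 0, 1, 2, 0, 3, 0, 1 => 4
  | 0, 1, 2, 0, 3, 4, 0 => 1
  | 0, 1, 2, 0, 4, 0, 1 => 5
  | 0, 1, 2, 3, 0, 1, 2 => 1
  | 0, 1, 2, 3, 1, 2, 0 => 2
  | 0, 1, 2, 3, 1, 2, 3 => 2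
  | 0, 1, 2, 3, 2, 0, 1 => 3
  | 0, 1, 2, 3, 2, 3, 0 => 3
  | 0, 1, 2, 3, 2, 3, 4 => 3
  | 0, 1, 2, 3, 3, 0, 1 => 5
  | 0, 1, 2, 3, 3, 4, 0 => 5
  | 0, 1, 2, 3, 4, 0, 1 => 3
  | 0, 2, 0, 1, 0, 1, 2 => 5
  | 0, 2, 0, 1, 1, 2, 0 => 3
  | 0, 2, 0, 1, 1, 2, 3 => 3
  | 0, 2, 0, 1, 2, 0, 1 => 0
  | 0, 2, 0, 1, 2, 3, 0 => 2
  | 0, 2, 0, 1, 2, 3, 4 => 0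
  | 0, 2, 0, 1, 3, 0, 1 => 0
  | 0, 2, 0, 1, 3, 4, 0 => 2
  | 0, 2, 0, 1, 4, 0, 1 => 1
  | 0, 2, 3, 0, 0, 1, 2 => 1
  | 0, 2, 3, 0, 1, 2, 0 => 5
  | 0, 2, 3, 0, 1, 2, 3 => 5
  | 0, 2, 3, 0, 2, 0, 1 => 0
  | 0, 2, 3, 0, 2, 3, 0 => 1
  | 0, 2, 3, 0, 2, 3, 4 => 2
  | 0, 2, 3, 0, 3, 0, 1 => 4
  | 0, 2, 3, 0, 3, 4, 0 => 1
  | 0, 2, 3, 0, 4, 0, 1 => 4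
  | 0, 2, 3, 4, 0, 1, 2 => 1
  | 0, 2, 3, 4, 1, 2, 0 => 5
  | 0, 2, 3, 4, 1, 2, 3 => 5
  | 0, 2, 3, 4, 2, 0, 1 => 4
  | 0, 2, 3, 4, 2, 3, 0 => 0
  | 0, 2, 3, 4, 2, 3, 4 => 3
  | 0, 2, 3, 4, 3, 0, 1 => 4
  | 0, 2, 3, 4, 3, 4, 0 => 0
  | 0, 2, 3, 4, 4, 0, 1 => 2
  | 0, 3, 0, 1, 0, 1, 2 => 5
  | 0, 3, 0, 1, 1, 2, 0 => 1
  | 0, 3, 0, 1, 1, 2, 3 => 4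
  | 0, 3, 0, 1, 2, 0, 1 => 0
  | 0, 3, 0, 1, 2, 3, 0 => 1
  | 0, 3, 0, 1, 2, 3, 4 => 0
  | 0, 3, 0, 1, 3, 0, 1 => 0
  | 0, 3, 0, 1, 3, 4, 0 => 1
  | 0, 3, 0, 1, 4, 0, 1 => 2
  | 0, 3, 4, 0, 0, 1, 2 => 3
  | 0, 3, 4, 0, 1, 2, 0 => 0
  | 0, 3, 4, 0, 1, 2, 3 => 4
  | 0, 3, 4, 0, 2, 0, 1 => 2
  | 0, 3, 4, 0, 2, 3, 0 => 2
  | 0, 3, 4, 0, 2, 3, 4 => 1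
  | 0, 3, 4, 0, 3, 0, 1 => 5
  | 0, 3, 4, 0, 3, 4, 0 => 4
  | 0, 3, 4, 0, 4, 0, 1 => 2
  | 0, 4, 0, 1, 0, 1, 2 => 5
  | 0, 4, 0, 1, 1, 2, 0 => 3
  | 0, 4, 0, 1, 1, 2, 3 => 4
  | 0, 4, 0, 1, 2, 0, 1 => 4
  | 0, 4, 0, 1, 2, 3, 0 => 3
  | 0, 4, 0, 1, 2, 3, 4 => 0
  | 0, 4, 0, 1, 3, 0, 1 => 0
  | 0, 4, 0, 1, 3, 4, 0 => 1
  | 0, 4, 0, 1, 4, 0, 1 => 0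
  | 1, 0, 1, 2, 0, 1, 2 => 4
  | 1, 0, 1, 2, 1, 2, 0 => 3
  | 1, 0, 1, 2, 1, 2, 3 => 3
  | 1, 0, 1, 2, 2, 0, 1 => 1
  | 1, 0, 1, 2, 2, 3, 0 => 0
  | 1, 0, 1, 2, 2, 3, 4 => 0
  | 1, 0, 1, 2, 3, 0, 1 => 5
  | 1, 0, 1, 2, 3, 4, 0 => 5
  | 1, 0, 1, 2, 4, 0, 1 => 1
  | 1, 1, 2, 0, 0, 1, 2 => 0
  | 1, 1, 2, 0, 1, 2, 0 => 5
  | 1, 1, 2, 0, 1, 2, 3 => 5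
  | 1, 1, 2, 0, 2, 0, 1 => 3
  | 1, 1, 2, 0, 2, 3, 0 => 3
  | 1, 1, 2, 0, 2, 3, 4 => 4
  | 1, 1, 2, 0, 3, 0, 1 => 2
  | 1, 1, 2, 0, 3, 4, 0 => 0
  | 1, 1, 2, 0, 4, 0, 1 => 2
  | 1, 1, 2, 3, 0, 1, 2 => 0
  | 1, 1, 2, 3, 1, 2, 0 => 5
  | 1, 1, 2, 3, 1, 2, 3 => 5
  | 1, 1, 2, 3, 2, 0, 1 => 1
  | 1, 1, 2, 3, 2, 3, 0 => 4
  | 1, 1, 2, 3, 2, 3, 4 => 1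
  | 1, 1, 2, 3, 3, 0, 1 => 2
  | 1, 1, 2, 3, 3, 4, 0 => 0
  | 1, 1, 2, 3, 4, 0, 1 => 2
  | 1, 2, 0, 1, 0, 1, 2 => 2
  | 1, 2, 0, 1, 1, 2, 0 => 1
  | 1, 2, 0, 1, 1, 2, 3 => 1
  | 1, 2, 0, 1, 2, 0, 1 => 5
  | 1, 2, 0, 1, 2, 3, 0 => 5
  | 1, 2, 0, 1, 2, 3, 4 => 5
  | 1, 2, 0, 1, 3, 0, 1 => 4
  | 1, 2, 0, 1, 3, 4, 0 => 3
  | 1, 2, 0, 1, 4, 0, 1 => 4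
  | 1, 2, 3, 0, 0, 1, 2 => 5
  | 1, 2, 3, 0, 1, 2, 0 => 4
  | 1, 2, 3, 0, 1, 2, 3 => 0
  | 1, 2, 3, 0, 2, 0, 1 => 1
  | 1, 2, 3, 0, 2, 3, 0 => 3
  | 1, 2, 3, 0, 2, 3, 4 => 1
  | 1, 2, 3, 0, 3, 0, 1 => 0
  | 1, 2, 3, 0, 3, 4, 0 => 5
  | 1, 2, 3, 0, 4, 0, 1 => 2
  | 1, 2, 3, 4, 0, 1, 2 => 0
  | 1, 2, 3, 4, 1, 2, 0 => 2
  | 1, 2, 3, 4, 1, 2, 3 => 2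
  | 1, 2, 3, 4, 2, 0, 1 => 3
  | 1, 2, 3, 4, 2, 3, 0 => 3
  | 1, 2, 3, 4, 2, 3, 4 => 1
  | 1, 2, 3, 4, 3, 0, 1 => 5
  | 1, 2, 3, 4, 3, 4, 0 => 5
  | 1, 2, 3, 4, 4, 0, 1 => 3
  | 1, 3, 0, 1, 0, 1, 2 => 1
  | 1, 3, 0, 1, 1, 2, 0 => 0
  | 1, 3, 0, 1, 1, 2, 3 => 0
  | 1, 3, 0, 1, 2, 0, 1 => 2
  | 1, 3, 0, 1, 2, 3, 0 => 2
  | 1, 3, 0, 1, 2, 3, 4 => 2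
  | 1, 3, 0, 1, 3, 0, 1 => 3
  | 1, 3, 0, 1, 3, 4, 0 => 4
  | 1, 3, 0, 1, 4, 0, 1 => 0
  | 1, 3, 4, 0, 0, 1, 2 => 1
  | 1, 3, 4, 0, 1, 2, 0 => 2
  | 1, 3, 4, 0, 1, 2, 3 => 5
  | 1, 3, 4, 0, 2, 0, 1 => 4
  | 1, 3, 4, 0, 2, 3, 0 => 3
  | 1, 3, 4, 0, 2, 3, 4 => 0
  | 1, 3, 4, 0, 3, 0, 1 => 4
  | 1, 3, 4, 0, 3, 4, 0 => 2
  | 1, 3, 4, 0, 4, 0, 1 => 5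
  | 1, 4, 0, 1, 0, 1, 2 => 1
  | 1, 4, 0, 1, 1, 2, 0 => 0
  | 1, 4, 0, 1, 1, 2, 3 => 0
  | 1, 4, 0, 1, 2, 0, 1 => 2
  | 1, 4, 0, 1, 2, 3, 0 => 2
  | 1, 4, 0, 1, 2, 3, 4 => 5
  | 1, 4, 0, 1, 3, 0, 1 => 5
  | 1, 4, 0, 1, 3, 4, 0 => 4
  | 1, 4, 0, 1, 4, 0, 1 => 2
  | 2, 0, 1, 2, 0, 1, 2 => 0
  | 2, 0, 1, 2, 1, 2, 0 => 2
  | 2, 0, 1, 2, 1, 2, 3 => 2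
  | 2, 0, 1, 2, 2, 0, 1 => 3
  | 2, 0, 1, 2, 2, 3, 0 => 4
  | 2, 0, 1, 2, 2, 3, 4 => 4
  | 2, 0, 1, 2, 3, 0, 1 => 1
  | 2, 0, 1, 2, 3, 4, 0 => 0
  | 2, 0, 1, 2, 4, 0, 1 => 3
  | 2, 1, 2, 0, 0, 1, 2 => 2
  | 2, 1, 2, 0, 1, 2, 0 => 4
  | 2, 1, 2, 0, 1, 2, 3 => 1
  | 2, 1, 2, 0, 2, 0, 1 => 4
  | 2, 1, 2, 0, 2, 3, 0 => 1
  | 2, 1, 2, 0, 2, 3, 4 => 1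
  | 2, 1, 2, 0, 3, 0, 1 => 3
  | 2, 1, 2, 0, 3, 4, 0 => 3
  | 2, 1, 2, 0, 4, 0, 1 => 4
  | 2, 1, 2, 3, 0, 1, 2 => 2
  | 2, 1, 2, 3, 1, 2, 0 => 4
  | 2, 1, 2, 3, 1, 2, 3 => 0
  | 2, 1, 2, 3, 2, 0, 1 => 4
  | 2, 1, 2, 3, 2, 3, 0 => 1
  | 2, 1, 2, 3, 2, 3, 4 => 5
  | 2, 1, 2, 3, 3, 0, 1 => 4
  | 2, 1, 2, 3, 3, 4, 0 => 1
  | 2, 1, 2, 3, 4, 0, 1 => 4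
  | 2, 2, 0, 1, 0, 1, 2 => 4
  | 2, 2, 0, 1, 1, 2, 0 => 0
  | 2, 2, 0, 1, 1, 2, 3 => 4
  | 2, 2, 0, 1, 2, 0, 1 => 1
  | 2, 2, 0, 1, 2, 3, 0 => 0
  | 2, 2, 0, 1, 2, 3, 4 => 2
  | 2, 2, 0, 1, 3, 0, 1 => 5
  | 2, 2, 0, 1, 3, 4, 0 => 5
  | 2, 2, 0, 1, 4, 0, 1 => 0
  | 2, 2, 3, 0, 0, 1, 2 => 3
  | 2, 2, 3, 0, 1, 2, 0 => 0
  | 2, 2, 3, 0, 1, 2, 3 => 4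
  | 2, 2, 3, 0, 2, 0, 1 => 2
  | 2, 2, 3, 0, 2, 3, 0 => 2
  | 2, 2, 3, 0, 2, 3, 4 => 0
  | 2, 2, 3, 0, 3, 0, 1 => 3
  | 2, 2, 3, 0, 3, 4, 0 => 3
  | 2, 2, 3, 0, 4, 0, 1 => 0
  | 2, 2, 3, 4, 0, 1, 2 => 3
  | 2, 2, 3, 4, 1, 2, 0 => 0
  | 2, 2, 3, 4, 1, 2, 3 => 4
  | 2, 2, 3, 4, 2, 0, 1 => 2
  | 2, 2, 3, 4, 2, 3, 0 => 2
  | 2, 2, 3, 4, 2, 3, 4 => 0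
  | 2, 2, 3, 4, 3, 0, 1 => 3
  | 2, 2, 3, 4, 3, 4, 0 => 2
  | 2, 2, 3, 4, 4, 0, 1 => 5
  | 2, 3, 0, 1, 0, 1, 2 => 4
  | 2, 3, 0, 1, 1, 2, 0 => 3
  | 2, 3, 0, 1, 1, 2, 3 => 3
  | 2, 3, 0, 1, 2, 0, 1 => 5
  | 2, 3, 0, 1, 2, 3, 0 => 0
  | 2, 3, 0, 1, 2, 3, 4 => 5
  | 2, 3, 0, 1, 3, 0, 1 => 5
  | 2, 3, 0, 1, 3, 4, 0 => 2
  | 2, 3, 0, 1, 4, 0, 1 => 5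
  | 2, 3, 4, 0, 0, 1, 2 => 4
  | 2, 3, 4, 0, 1, 2, 0 => 1
  | 2, 3, 4, 0, 1, 2, 3 => 1
  | 2, 3, 4, 0, 2, 0, 1 => 5
  | 2, 3, 4, 0, 2, 3, 0 => 1
  | 2, 3, 4, 0, 2, 3, 4 => 5
  | 2, 3, 4, 0, 3, 0, 1 => 0
  | 2, 3, 4, 0, 3, 4, 0 => 3
  | 2, 3, 4, 0, 4, 0, 1 => 0
  | 2, 4, 0, 1, 0, 1, 2 => 2
  | 2, 4, 0, 1, 1, 2, 0 => 4
  | 2, 4, 0, 1, 1, 2, 3 => 3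
  | 2, 4, 0, 1, 2, 0, 1 => 0
  | 2, 4, 0, 1, 2, 3, 0 => 0
  | 2, 4, 0, 1, 2, 3, 4 => 2
  | 2, 4, 0, 1, 3, 0, 1 => 2
  | 2, 4, 0, 1, 3, 4, 0 => 5
  | 2, 4, 0, 1, 4, 0, 1 => 4
  | 3, 0, 1, 2, 0, 1, 2 => 5
  | 3, 0, 1, 2, 1, 2, 0 => 0
  | 3, 0, 1, 2, 1, 2, 3 => 4
  | 3, 0, 1, 2, 2, 0, 1 => 0
  | 3, 0, 1, 2, 2, 3, 0 => 2
  | 3, 0, 1, 2, 2, 3, 4 => 2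
  | 3, 0, 1, 2, 3, 0, 1 => 0
  | 3, 0, 1, 2, 3, 4, 0 => 2
  | 3, 0, 1, 2, 4, 0, 1 => 0
  | 3, 1, 2, 0, 0, 1, 2 => 1
  | 3, 1, 2, 0, 1, 2, 0 => 2
  | 3, 1, 2, 0, 1, 2, 3 => 2
  | 3, 1, 2, 0, 2, 0, 1 => 2
  | 3, 1, 2, 0, 2, 3, 0 => 4
  | 3, 1, 2, 0, 2, 3, 4 => 3
  | 3, 1, 2, 0, 3, 0, 1 => 1
  | 3, 1, 2, 0, 3, 4, 0 => 4
  | 3, 1, 2, 0, 4, 0, 1 => 3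
  | 3, 1, 2, 3, 0, 1, 2 => 4
  | 3, 1, 2, 3, 1, 2, 0 => 3
  | 3, 1, 2, 3, 1, 2, 3 => 3
  | 3, 1, 2, 3, 2, 0, 1 => 5
  | 3, 1, 2, 3, 2, 3, 0 => 5
  | 3, 1, 2, 3, 2, 3, 4 => 4
  | 3, 1, 2, 3, 3, 0, 1 => 1
  | 3, 1, 2, 3, 3, 4, 0 => 4
  | 3, 1, 2, 3, 4, 0, 1 => 1
  | 3, 2, 0, 1, 0, 1, 2 => 3
  | 3, 2, 0, 1, 1, 2, 0 => 4
  | 3, 2, 0, 1, 1, 2, 3 => 0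
  | 3, 2, 0, 1, 2, 0, 1 => 4
  | 3, 2, 0, 1, 2, 3, 0 => 1
  | 3, 2, 0, 1, 2, 3, 4 => 1
  | 3, 2, 0, 1, 3, 0, 1 => 3
  | 3, 2, 0, 1, 3, 4, 0 => 1
  | 3, 2, 0, 1, 4, 0, 1 => 5
  | 3, 2, 3, 0, 0, 1, 2 => 2
  | 3, 2, 3, 0, 1, 2, 0 => 2
  | 3, 2, 3, 0, 1, 2, 3 => 2
  | 3, 2, 3, 0, 2, 0, 1 => 3
  | 3, 2, 3, 0, 2, 3, 0 => 4
  | 3, 2, 3, 0, 2, 3, 4 => 3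
  | 3, 2, 3, 0, 3, 0, 1 => 2
  | 3, 2, 3, 0, 3, 4, 0 => 0
  | 3, 2, 3, 0, 4, 0, 1 => 3
  | 3, 2, 3, 4, 0, 1, 2 => 5
  | 3, 2, 3, 4, 1, 2, 0 => 4
  | 3, 2, 3, 4, 1, 2, 3 => 0
  | 3, 2, 3, 4, 2, 0, 1 => 1
  | 3, 2, 3, 4, 2, 3, 0 => 4
  | 3, 2, 3, 4, 2, 3, 4 => 2
  | 3, 2, 3, 4, 3, 0, 1 => 2
  | 3, 2, 3, 4, 3, 4, 0 => 1
  | 3, 2, 3, 4, 4, 0, 1 => 4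
  | 3, 3, 0, 1, 0, 1, 2 => 3
  | 3, 3, 0, 1, 1, 2, 0 => 4
  | 3, 3, 0, 1, 1, 2, 3 => 1
  | 3, 3, 0, 1, 2, 0, 1 => 4
  | 3, 3, 0, 1, 2, 3, 0 => 5
  | 3, 3, 0, 1, 2, 3, 4 => 1
  | 3, 3, 0, 1, 3, 0, 1 => 4
  | 3, 3, 0, 1, 3, 4, 0 => 3
  | 3, 3, 0, 1, 4, 0, 1 => 4
  | 3, 3, 4, 0, 0, 1, 2 => 0
  | 3, 3, 4, 0, 1, 2, 0 => 5
  | 3, 3, 4, 0, 1, 2, 3 => 2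
  | 3, 3, 4, 0, 2, 0, 1 => 3
  | 3, 3, 4, 0, 2, 3, 0 => 5
  | 3, 3, 4, 0, 2, 3, 4 => 3
  | 3, 3, 4, 0, 3, 0, 1 => 3
  | 3, 3, 4, 0, 3, 4, 0 => 0
  | 3, 3, 4, 0, 4, 0, 1 => 3
  | 3, 4, 0, 1, 0, 1, 2 => 3
  | 3, 4, 0, 1, 1, 2, 0 => 1
  | 3, 4, 0, 1, 1, 2, 3 => 1
  | 3, 4, 0, 1, 2, 0, 1 => 5
  | 3, 4, 0, 1, 2, 3, 0 => 1
  | 3, 4, 0, 1, 2, 3, 4 => 1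
  | 3, 4, 0, 1, 3, 0, 1 => 4
  | 3, 4, 0, 1, 3, 4, 0 => 3
  | 3, 4, 0, 1, 4, 0, 1 => 5
  | _, _, _, _, _, _, _ => 0
def P4 : List (ℕ×ℕ×ℕ×ℕ×ℕ) := [(0, 1, 2, 0, 1), (0, 1, 2, 3, 0), (0, 1, 2, 3, 4), (1, 2, 0, 1, 2), (1, 2, 3, 0, 1), (1, 2, 3, 4, 0), (2, 0, 1, 2, 0), (2, 0, 1, 2, 3), (2, 3, 0, 1, 2), (2, 3, 4, 0, 1), (3, 0, 1, 2, 0), (3, 0, 1, 2, 3), (3, 4, 0, 1, 2), (4, 0, 1, 2, 0), (4, 0, 1, 2, 3)]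
abbrev Check (x0 x1 x2 x3 x4 y0 y1 y2 y3 y4 : ℕ) : Prop :=
    tab 0 x1 x2 x3 y1 y2 y3 ≠ tab 1 x1 x2 x3 y1 y2 y3 ∧
    tab 0 x1 x2 x3 y1 y2 y3 ≠ tab 2 x1 x2 x3 y1 y2 y3 ∧
    tab 0 x1 x2 x3 y1 y2 y3 ≠ tab 3 x1 x2 x3 y1 y2 y3 ∧
    tab 1 x1 x2 x3 y1 y2 y3 ≠ tab 0 x1 x2 x3 y1 y2 y3 ∧
    tab 1 x1 x2 x3 y1 y2 y3 ≠ tab 2 x1 x2 x3 y1 y2 y3 ∧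
    tab 1 x1 x2 x3 y1 y2 y3 ≠ tab 3 x1 x2 x3 y1 y2 y3 ∧
    tab 2 x1 x2 x3 y1 y2 y3 ≠ tab 0 x1 x2 x3 y1 y2 y3 ∧
    tab 2 x1 x2 x3 y1 y2 y3 ≠ tab 1 x1 x2 x3 y1 y2 y3 ∧
    tab 2 x1 x2 x3 y1 y2 y3 ≠ tab 3 x1 x2 x3 y1 y2 y3 ∧
    tab 3 x1 x2 x3 y1 y2 y3 ≠ tab 0 x1 x2 x3 y1 y2 y3 ∧
    tab 3 x1 x2 x3 y1 y2 y3 ≠ tab 1 x1 x2 x3 y1 y2 y3 ∧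
    tab 3 x1 x2 x3 y1 y2 y3 ≠ tab 2 x1 x2 x3 y1 y2 y3 ∧
    tab 0 x1 x2 x3 y0 y1 y2 ≠ tab 0 x1 x2 x3 y1 y2 y3 ∧
    tab 0 x1 x2 x3 y0 y1 y2 ≠ tab 1 x1 x2 x3 y1 y2 y3 ∧
    tab 0 x1 x2 x3 y0 y1 y2 ≠ tab 2 x1 x2 x3 y1 y2 y3 ∧
    tab 0 x1 x2 x3 y0 y1 y2 ≠ tab 3 x1 x2 x3 y1 y2 y3 ∧
    tab 1 x1 x2 x3 y2 y3 y4 ≠ tab 0 x1 x2 x3 y1 y2 y3 ∧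
    tab 1 x1 x2 x3 y2 y3 y4 ≠ tab 1 x1 x2 x3 y1 y2 y3 ∧
    tab 1 x1 x2 x3 y2 y3 y4 ≠ tab 2 x1 x2 x3 y1 y2 y3 ∧
    tab 1 x1 x2 x3 y2 y3 y4 ≠ tab 3 x1 x2 x3 y1 y2 y3 ∧
    tab 2 x2 x3 x4 y1 y2 y3 ≠ tab 0 x1 x2 x3 y1 y2 y3 ∧
    tab 2 x2 x3 x4 y1 y2 y3 ≠ tab 1 x1 x2 x3 y1 y2 y3 ∧
    tab 2 x2 x3 x4 y1 y2 y3 ≠ tab 2 x1 x2 x3 y1 y2 y3 ∧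
    tab 2 x2 x3 x4 y1 y2 y3 ≠ tab 3 x1 x2 x3 y1 y2 y3 ∧
    tab 3 x0 x1 x2 y1 y2 y3 ≠ tab 0 x1 x2 x3 y1 y2 y3 ∧
    tab 3 x0 x1 x2 y1 y2 y3 ≠ tab 1 x1 x2 x3 y1 y2 y3 ∧
    tab 3 x0 x1 x2 y1 y2 y3 ≠ tab 2 x1 x2 x3 y1 y2 y3 ∧
    tab 3 x0 x1 x2 y1 y2 y3 ≠ tab 3 x1 x2 x3 y1 y2 y3

def good2 (a b : ℕ) : Bool :=
  decide ((a,b) ∈ [((0:ℕ),(1:ℕ)),(1,2),(2,0),(2,3),(3,0),(3,4),(4,0)])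

lemma checkOK : ∀ X ∈ P4, ∀ Y ∈ P4,
    Check X.1 X.2.1 X.2.2.1 X.2.2.2.1 X.2.2.2.2 Y.1 Y.2.1 Y.2.2.1 Y.2.2.2.1 Y.2.2.2.2 := by
  decide

lemma good2_lt {a b : ℕ} (h : good2 a b = true) : a < 5 ∧ b < 5 := by
  simp [good2, Prod.ext_iff] at h
  omega

set_option synthInstance.maxSize 40000 in
set_option synthInstance.maxHeartbeats 10000000 in
set_option maxHeartbeats 4000000 in
lemma chainMem : ∀ a < 5, ∀ b < 5, ∀ c < 5, ∀ d < 5, ∀ e < 5,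
    good2 a b = true → good2 b c = true → good2 c d = true → good2 d e = true →
    (a,b,c,d,e) ∈ P4 := by
  decide


def blk (M : ℕ) : ℕ := if M % 3 = 1 then 4 else if M % 3 = 2 then 5 else 0

def seqv (M i : ℕ) : ℕ := if i < blk M then i else (i - blk M) % 3

lemma blk_cases (M : ℕ) (hM : 3 ≤ M) :
    (blk M = 0 ∧ M % 3 = 0) ∨ (blk M = 4 ∧ M % 3 = 1 ∧ 4 ≤ M) ∨
      (blk M = 5 ∧ M % 3 = 2 ∧ 5 ≤ M) := by
  by_cases h1 : M % 3 = 1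
  · exact Or.inr (Or.inl ⟨by simp [blk, h1], h1, by omega⟩)
  by_cases h2 : M % 3 = 2
  · exact Or.inr (Or.inr ⟨by simp [blk, h1, h2], h2, by omega⟩)
  · exact Or.inl ⟨by simp [blk, h1, h2], by omega⟩

lemma seqv_zero (M : ℕ) : seqv M 0 = 0 := by
  unfold seqv
  split <;> simp

lemma step_nat (M i : ℕ) (hM : 3 ≤ M) (hi : i < M) :
    good2 (seqv M i) (seqv M ((i+1) % M)) = true := by
  rcases Nat.eq_or_lt_of_le hi with hw | hw
  · -- wrap around : i + 1 = M
    have h0 : (i+1) % M = 0 := by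
      have : i + 1 = M := by omega
      rw [this, Nat.mod_self]
    rw [h0, seqv_zero]
    rcases blk_cases M hM with ⟨hb, h3⟩ | ⟨hb, h3, h4⟩ | ⟨hb, h3, h4⟩
    · have : seqv M i = 2 := by
        unfold seqv; rw [hb]
        simp only [Nat.not_lt_zero, if_false]
        omega
      rw [this]; decide
    · rcases Nat.eq_or_lt_of_le h4 with h5 | h5
      · have : seqv M i = 3 := by unfold seqv; rw [hb]; rw [if_pos (by omega)]; omega
        rw [this]; decide
      · have : seqv M i = 2 := by
          unfold seqv; rw [hb, if_neg (by omega)]; omega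
        rw [this]; decide
    · rcases Nat.eq_or_lt_of_le h4 with h5 | h5
      · have : seqv M i = 4 := by unfold seqv; rw [hb, if_pos (by omega)]; omega
        rw [this]; decide
      · have : seqv M i = 2 := by
          unfold seqv; rw [hb, if_neg (by omega)]; omega
        rw [this]; decide
  · -- no wrap
    have h0 : (i+1) % M = i + 1 := Nat.mod_eq_of_lt hw
    rw [h0]
    have hble : blk M ≤ 5 ∧ (blk M = 0 ∨ blk M = 4 ∨ blk M = 5) := by
      rcases blk_cases M hM with ⟨hb, _⟩ | ⟨hb, _⟩ | ⟨hb, _⟩ <;> omega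
    by_cases hA : i + 1 < blk M
    · have e1 : seqv M i = i := by unfold seqv; rw [if_pos (by omega)]
      have e2 : seqv M (i+1) = i + 1 := by unfold seqv; rw [if_pos hA]
      rw [e1, e2]
      have : i < 4 := by omega
      interval_cases i <;> decide
    · by_cases hB : i + 1 = blk M
      · have e1 : seqv M i = i := by unfold seqv; rw [if_pos (by omega)]
        have e2 : seqv M (i+1) = 0 := by
          unfold seqv; rw [if_neg (by omega)]; omega
        rw [e1, e2]
        have : i = 3 ∨ i = 4 := by omega
        rcases this with h | h <;> (subst h; decide)
      · have hge : blk M ≤ i := by omega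
        have e1 : seqv M i = (i - blk M) % 3 := by unfold seqv; rw [if_neg (by omega)]
        have e2 : seqv M (i+1) = (i - blk M + 1) % 3 := by
          unfold seqv; rw [if_neg (by omega)]
          congr 1; omega
        rw [e1, e2]
        have h3 : (i - blk M) % 3 = 0 ∧ (i - blk M + 1) % 3 = 1 ∨
            (i - blk M) % 3 = 1 ∧ (i - blk M + 1) % 3 = 2 ∨
            (i - blk M) % 3 = 2 ∧ (i - blk M + 1) % 3 = 0 := by omega
        rcases h3 with ⟨u,v⟩ | ⟨u,v⟩ | ⟨u,v⟩ <;> rw [u, v] <;> decide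

def sv (m : ℕ) (i : Fin (m+3)) : ℕ := seqv (m+3) i.val

lemma val_one_eq (m : ℕ) : ((1 : Fin (m+3)) : ℕ) = 1 := by
  rw [Fin.val_one']
  exact Nat.mod_eq_of_lt (by omega)

lemma step (m : ℕ) (i : Fin (m+3)) : good2 (sv m i) (sv m (i+1)) = true := by
  have h1 : (i + 1 : Fin (m+3)).val = (i.val + 1) % (m+3) := by
    rw [Fin.val_add, val_one_eq]
  unfold sv
  rw [h1]
  exact step_nat (m+3) i.val (by omega) i.isLt

lemma chain5 (m : ℕ) (i : Fin (m+3)) :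
    (sv m (i-2), sv m (i-1), sv m i, sv m (i+1), sv m (i+2)) ∈ P4 := by
  have s1 := step m (i-2); rw [show (i-2)+1 = i-1 by ring] at s1
  have s2 := step m (i-1); rw [show (i-1)+1 = i by ring] at s2
  have s3 := step m i
  have s4 := step m (i+1); rw [show (i+1)+1 = i+2 by ring] at s4
  obtain ⟨b0, b1⟩ := good2_lt s1
  obtain ⟨-, b2⟩ := good2_lt s2
  obtain ⟨-, b3⟩ := good2_lt s3
  obtain ⟨-, b4⟩ := good2_lt s4
  exact chainMem _ b0 _ b1 _ b2 _ b3 _ b4 s1 s2 s3 s4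

lemma one_ne (k : ℕ) : (1 : Fin (k+3)) ≠ 0 := by
  intro h
  rw [show (1 : Fin (k+3)) = ((1:ℕ) : Fin (k+3)) by norm_cast, Fin.natCast_eq_zero] at h
  have := Nat.le_of_dvd (by norm_num) h
  omega

lemma two_ne (k : ℕ) : (2 : Fin (k+3)) ≠ 0 := by
  intro h
  rw [show (2 : Fin (k+3)) = ((2:ℕ) : Fin (k+3)) by norm_cast, Fin.natCast_eq_zero] at h
  have := Nat.le_of_dvd (by norm_num) h
  omega

lemma add_one_ne (k : ℕ) (x : Fin (k+3)) : x + 1 ≠ x :=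
  fun h => one_ne k (by linear_combination h)

lemma sub_one_ne (k : ℕ) (x : Fin (k+3)) : x - 1 ≠ x :=
  fun h => one_ne k (by linear_combination -h)

lemma sub_ne_add (k : ℕ) (x : Fin (k+3)) : x - 1 ≠ x + 1 :=
  fun h => two_ne k (by linear_combination -h)

lemma add_ne_sub (k : ℕ) (x : Fin (k+3)) : x + 1 ≠ x - 1 :=
  fun h => two_ne k (by linear_combination h)

def colV (m n : ℕ) (v w : Fin (m+3) × Fin (n+3)) : Fin 6 :=
  if w.2 = v.2 + 1 ∧ w.1 = v.1 then
    tab 0 (sv m (v.1-1)) (sv m v.1) (sv m (v.1+1)) (sv n (v.2-1)) (sv n v.2) (sv n (v.2+1))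
  else if w.2 = v.2 - 1 ∧ w.1 = v.1 then
    tab 1 (sv m (v.1-1)) (sv m v.1) (sv m (v.1+1)) (sv n (v.2-1)) (sv n v.2) (sv n (v.2+1))
  else if w.1 = v.1 - 1 ∧ w.2 = v.2 then
    tab 2 (sv m (v.1-1)) (sv m v.1) (sv m (v.1+1)) (sv n (v.2-1)) (sv n v.2) (sv n (v.2+1))
  else
    tab 3 (sv m (v.1-1)) (sv m v.1) (sv m (v.1+1)) (sv n (v.2-1)) (sv n v.2) (sv n (v.2+1))

variable {m n : ℕ}

lemma colV_R (v w : Fin (m+3) × Fin (n+3)) (h2 : w.2 = v.2 + 1) (h1 : w.1 = v.1) :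
    colV m n v w = tab 0 (sv m (v.1-1)) (sv m v.1) (sv m (v.1+1)) (sv n (v.2-1)) (sv n v.2) (sv n (v.2+1)) := by
  unfold colV; rw [if_pos ⟨h2, h1⟩]

lemma colV_L (v w : Fin (m+3) × Fin (n+3)) (h2 : w.2 = v.2 - 1) (h1 : w.1 = v.1) :
    colV m n v w = tab 1 (sv m (v.1-1)) (sv m v.1) (sv m (v.1+1)) (sv n (v.2-1)) (sv n v.2) (sv n (v.2+1)) := by
  unfold colV
  rw [if_neg (fun hc => sub_ne_add n v.2 (h2 ▸ hc.1)), if_pos ⟨h2, h1⟩]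

lemma colV_U (v w : Fin (m+3) × Fin (n+3)) (h1 : w.1 = v.1 - 1) (h2 : w.2 = v.2) :
    colV m n v w = tab 2 (sv m (v.1-1)) (sv m v.1) (sv m (v.1+1)) (sv n (v.2-1)) (sv n v.2) (sv n (v.2+1)) := by
  unfold colV
  rw [if_neg (fun hc => sub_one_ne m v.1 (h1 ▸ hc.2)),
      if_neg (fun hc => sub_one_ne m v.1 (h1 ▸ hc.2)), if_pos ⟨h1, h2⟩]

lemma colV_D (v w : Fin (m+3) × Fin (n+3)) (h1 : w.1 = v.1 + 1) (h2 : w.2 = v.2) :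
    colV m n v w = tab 3 (sv m (v.1-1)) (sv m v.1) (sv m (v.1+1)) (sv n (v.2-1)) (sv n v.2) (sv n (v.2+1)) := by
  unfold colV
  rw [if_neg (fun hc => add_one_ne m v.1 (h1 ▸ hc.2)),
      if_neg (fun hc => add_one_ne m v.1 (h1 ▸ hc.2)),
      if_neg (fun hc => add_ne_sub m v.1 (h1 ▸ hc.1))]

lemma cyc_cases {k : ℕ} (u w : Fin (k+3)) (h : (SimpleGraph.cycleGraph (k+3)).Adj u w) :
    w = u + 1 ∨ w = u - 1 := by
  rw [SimpleGraph.cycleGraph_adj'] at h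
  rcases h with h | h
  · right
    have huw : u - w = 1 := Fin.val_injective (by rw [val_one_eq]; exact h)
    linear_combination -huw
  · left
    have huw : w - u = 1 := Fin.val_injective (by rw [val_one_eq]; exact h)
    linear_combination huw

lemma adj_cases (v w : Fin (m+3) × Fin (n+3)) (h : (toroidalGrid (m+3) (n+3)).Adj v w) :
    (w.1 = v.1 ∧ (w.2 = v.2 + 1 ∨ w.2 = v.2 - 1)) ∨
      (w.2 = v.2 ∧ (w.1 = v.1 + 1 ∨ w.1 = v.1 - 1)) := by
  simp only [toroidalGrid, SimpleGraph.boxProd_adj] at h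
  rcases h with ⟨h1, h2⟩ | ⟨h1, h2⟩
  · exact Or.inr ⟨h2.symm, cyc_cases v.1 w.1 h1⟩
  · exact Or.inl ⟨h2.symm, cyc_cases v.2 w.2 h1⟩

set_option maxHeartbeats 1600000 in
lemma master (u : Fin (m+3) × Fin (n+3)) :
    Check (sv m (u.1-2)) (sv m (u.1-1)) (sv m u.1) (sv m (u.1+1)) (sv m (u.1+2))
      (sv n (u.2-2)) (sv n (u.2-1)) (sv n u.2) (sv n (u.2+1)) (sv n (u.2+2)) :=
  checkOK _ (chain5 m u.1) _ (chain5 n u.2)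

lemma L1 (v w1 w2 : Fin (m+3) × Fin (n+3)) (h1 : (toroidalGrid (m+3) (n+3)).Adj v w1)
    (h2 : (toroidalGrid (m+3) (n+3)).Adj v w2) (hne : w1 ≠ w2) :
    colV m n v w1 ≠ colV m n v w2 := by
  obtain ⟨q1,q2,q3,q4,q5,q6,q7,q8,q9,q10,q11,q12,-⟩ := master v
  rcases adj_cases v w1 h1 with ⟨a1, b1 | b1⟩ | ⟨a1, b1 | b1⟩
  · rcases adj_cases v w2 h2 with ⟨a2, b2 | b2⟩ | ⟨a2, b2 | b2⟩
    · exact absurd (Prod.ext_iff.mpr ⟨a1.trans a2.symm, b1.trans b2.symm⟩) hne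
    · rw [colV_R v w1 b1 a1, colV_L v w2 b2 a2]; exact q1
    · rw [colV_R v w1 b1 a1, colV_D v w2 b2 a2]; exact q3
    · rw [colV_R v w1 b1 a1, colV_U v w2 b2 a2]; exact q2
  · rcases adj_cases v w2 h2 with ⟨a2, b2 | b2⟩ | ⟨a2, b2 | b2⟩
    · rw [colV_L v w1 b1 a1, colV_R v w2 b2 a2]; exact q4
    · exact absurd (Prod.ext_iff.mpr ⟨a1.trans a2.symm, b1.trans b2.symm⟩) hne
    · rw [colV_L v w1 b1 a1, colV_D v w2 b2 a2]; exact q6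
    · rw [colV_L v w1 b1 a1, colV_U v w2 b2 a2]; exact q5
  · rcases adj_cases v w2 h2 with ⟨a2, b2 | b2⟩ | ⟨a2, b2 | b2⟩
    · rw [colV_D v w1 b1 a1, colV_R v w2 b2 a2]; exact q10
    · rw [colV_D v w1 b1 a1, colV_L v w2 b2 a2]; exact q11
    · exact absurd (Prod.ext_iff.mpr ⟨b1.trans b2.symm, a1.trans a2.symm⟩) hne
    · rw [colV_D v w1 b1 a1, colV_U v w2 b2 a2]; exact q12
  · rcases adj_cases v w2 h2 with ⟨a2, b2 | b2⟩ | ⟨a2, b2 | b2⟩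
    · rw [colV_U v w1 b1 a1, colV_R v w2 b2 a2]; exact q7
    · rw [colV_U v w1 b1 a1, colV_L v w2 b2 a2]; exact q8
    · rw [colV_U v w1 b1 a1, colV_D v w2 b2 a2]; exact q9
    · exact absurd (Prod.ext_iff.mpr ⟨b1.trans b2.symm, a1.trans a2.symm⟩) hne

lemma L2 (v w z : Fin (m+3) × Fin (n+3)) (hvw : (toroidalGrid (m+3) (n+3)).Adj v w)
    (hwz : (toroidalGrid (m+3) (n+3)).Adj w z) :
    colV m n v w ≠ colV m n w z := by
  obtain ⟨-,-,-,-,-,-,-,-,-,-,-,-,q13,q14,q15,q16,q17,q18,q19,q20,q21,q22,q23,q24,q25,q26,q27,q28⟩ :=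
    master w
  rcases adj_cases v w hvw with ⟨a1, b1 | b1⟩ | ⟨a1, b1 | b1⟩
  · -- v → w is R : v = (w.1, w.2 - 1)
    have hv1 : v.1 = w.1 := a1.symm
    have hv2 : v.2 = w.2 - 1 := by rw [b1]; ring
    have hcol : colV m n v w = tab 0 (sv m (w.1-1)) (sv m w.1) (sv m (w.1+1))
        (sv n (w.2-2)) (sv n (w.2-1)) (sv n w.2) := by
      rw [colV_R v w b1 a1, hv1, hv2, show w.2-1-1 = w.2-2 by ring, show w.2-1+1 = w.2 by ring]
    rw [hcol]
    rcases adj_cases w z hwz with ⟨a2, b2 | b2⟩ | ⟨a2, b2 | b2⟩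
    · rw [colV_R w z b2 a2]; exact q13
    · rw [colV_L w z b2 a2]; exact q14
    · rw [colV_D w z b2 a2]; exact q16
    · rw [colV_U w z b2 a2]; exact q15
  · -- v → w is L : v = (w.1, w.2 + 1)
    have hv1 : v.1 = w.1 := a1.symm
    have hv2 : v.2 = w.2 + 1 := by rw [b1]; ring
    have hcol : colV m n v w = tab 1 (sv m (w.1-1)) (sv m w.1) (sv m (w.1+1))
        (sv n w.2) (sv n (w.2+1)) (sv n (w.2+2)) := by
      rw [colV_L v w b1 a1, hv1, hv2, show w.2+1-1 = w.2 by ring, show w.2+1+1 = w.2+2 by ring]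
    rw [hcol]
    rcases adj_cases w z hwz with ⟨a2, b2 | b2⟩ | ⟨a2, b2 | b2⟩
    · rw [colV_R w z b2 a2]; exact q17
    · rw [colV_L w z b2 a2]; exact q18
    · rw [colV_D w z b2 a2]; exact q20
    · rw [colV_U w z b2 a2]; exact q19
  · -- v → w is D : v = (w.1 - 1, w.2)
    have hv1 : v.1 = w.1 - 1 := by rw [b1]; ring
    have hv2 : v.2 = w.2 := a1.symm
    have hcol : colV m n v w = tab 3 (sv m (w.1-2)) (sv m (w.1-1)) (sv m w.1)
        (sv n (w.2-1)) (sv n w.2) (sv n (w.2+1)) := by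
      rw [colV_D v w b1 a1, hv1, hv2, show w.1-1-1 = w.1-2 by ring, show w.1-1+1 = w.1 by ring]
    rw [hcol]
    rcases adj_cases w z hwz with ⟨a2, b2 | b2⟩ | ⟨a2, b2 | b2⟩
    · rw [colV_R w z b2 a2]; exact q25
    · rw [colV_L w z b2 a2]; exact q26
    · rw [colV_D w z b2 a2]; exact q28
    · rw [colV_U w z b2 a2]; exact q27
  · -- v → w is U : v = (w.1 + 1, w.2)
    have hv1 : v.1 = w.1 + 1 := by rw [b1]; ring
    have hv2 : v.2 = w.2 := a1.symm
    have hcol : colV m n v w = tab 2 (sv m w.1) (sv m (w.1+1)) (sv m (w.1+2))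
        (sv n (w.2-1)) (sv n w.2) (sv n (w.2+1)) := by
      rw [colV_U v w b1 a1, hv1, hv2, show w.1+1-1 = w.1 by ring, show w.1+1+1 = w.1+2 by ring]
    rw [hcol]
    rcases adj_cases w z hwz with ⟨a2, b2 | b2⟩ | ⟨a2, b2 | b2⟩
    · rw [colV_R w z b2 a2]; exact q21
    · rw [colV_L w z b2 a2]; exact q22
    · rw [colV_D w z b2 a2]; exact q24
    · rw [colV_U w z b2 a2]; exact q23

end IncAux

theorem incidence_chromatic_toroidal_grid_le_six (m n : ℕ) (hm : 3 ≤ m) (hn : 3 ≤ n) :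
    incidenceChromaticNumber (toroidalGrid m n) ≤ 6 := by
  obtain ⟨m', rfl⟩ : ∃ k, m = k + 3 := ⟨m - 3, by omega⟩
  obtain ⟨n', rfl⟩ : ∃ k, n = k + 3 := ⟨n - 3, by omega⟩
  have hc : (incidenceGraph (toroidalGrid (m'+3) (n'+3))).Colorable 6 := by
    refine ⟨SimpleGraph.Coloring.mk
      (fun p => IncAux.colV m' n' p.1.1 (Sym2.Mem.other p.2.2)) ?_⟩
    rintro p q ⟨hne, hcase⟩
    show IncAux.colV m' n' p.1.1 (Sym2.Mem.other p.2.2) ≠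
      IncAux.colV m' n' q.1.1 (Sym2.Mem.other q.2.2)
    set vp := Sym2.Mem.other p.2.2 with hvp
    set vq := Sym2.Mem.other q.2.2 with hvq
    have hep : s(p.1.1, vp) = p.1.2 := Sym2.other_spec p.2.2
    have heq : s(q.1.1, vq) = q.1.2 := Sym2.other_spec q.2.2
    have hadj_p : (toroidalGrid (m'+3) (n'+3)).Adj p.1.1 vp := by
      rw [← SimpleGraph.mem_edgeSet, hep]; exact p.2.1
    have hadj_q : (toroidalGrid (m'+3) (n'+3)).Adj q.1.1 vq := by
      rw [← SimpleGraph.mem_edgeSet, heq]; exact q.2.1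
    rcases hcase with hvv | hee | hef | hfe
    · -- same vertex
      have hne' : vp ≠ vq := by
        intro h
        refine hne (Subtype.ext (Prod.ext_iff.mpr ⟨hvv, ?_⟩))
        rw [← hep, ← heq, h, hvv]
      rw [← hvv] at hadj_q
      rw [← hvv]
      exact IncAux.L1 p.1.1 _ _ hadj_p hadj_q hne'
    · -- same edge
      have hvw : p.1.1 ≠ q.1.1 := by
        intro h
        exact hne (Subtype.ext (Prod.ext_iff.mpr ⟨h, hee⟩))
      have hq_mem : q.1.1 ∈ s(p.1.1, vp) := by
        rw [hep, hee]; exact q.2.2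
      rcases Sym2.mem_iff.mp hq_mem with h | h
      · exact absurd h.symm hvw
      · have hp_mem : p.1.1 ∈ s(q.1.1, vq) := by
          rw [heq, ← hee]; exact p.2.2
        rcases Sym2.mem_iff.mp hp_mem with h' | h'
        · exact absurd h' hvw
        · rw [← h, ← h']
          rw [← h] at hadj_p
          exact IncAux.L2 p.1.1 q.1.1 p.1.1 hadj_p hadj_p.symm
    · -- s(v,w) = e
      have h2 : s(p.1.1, q.1.1) = s(p.1.1, vp) := hef.trans hep.symm
      rcases Sym2.eq_iff.mp h2 with ⟨-, h⟩ | ⟨h1, -⟩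
      · rw [← h]
        rw [← h] at hadj_p
        exact IncAux.L2 p.1.1 q.1.1 _ hadj_p hadj_q
      · exact absurd h1 hadj_p.ne
    · -- s(v,w) = f
      have h2 : s(p.1.1, q.1.1) = s(q.1.1, vq) := hfe.trans heq.symm
      have hadj_pq : (toroidalGrid (m'+3) (n'+3)).Adj p.1.1 q.1.1 := by
        rw [← SimpleGraph.mem_edgeSet, hfe]; exact q.2.1
      rcases Sym2.eq_iff.mp h2 with ⟨h1, -⟩ | ⟨h1, -⟩
      · exact absurd h1 hadj_pq.ne
      · rw [← h1]
        exact (IncAux.L2 q.1.1 p.1.1 _ hadj_pq.symm hadj_p).symm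
  have hle := hc.chromaticNumber_le
  rw [incidenceChromaticNumber]
  exact_mod_cast hle
end

section
/- For every integer k ≥ 1 and every even integer n ≥ 3, the chromatic number of the square of the toroidal grid satisfies χ(T_{3k,n}²) ≤ 6. -/
open SimpleGraph

lemma castval_add_aux {m d : ℕ} [NeZero m] (hd : d ∣ m) (i j : Fin m) :
    (((i + j : Fin m).val : ℕ) : ZMod d) = (i.val : ZMod d) + (j.val : ZMod d) := by
  have h1 : (i + j : Fin m).val = (i.val + j.val) % m := Fin.val_add i j
  have h2 : (i.val + j.val) % m + m * ((i.val + j.val) / m) = i.val + j.val :=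
    Nat.mod_add_div _ _
  have hm : ((m : ℕ) : ZMod d) = 0 := (ZMod.natCast_eq_zero_iff m d).2 hd
  have := congrArg (Nat.cast : ℕ → ZMod d) h2
  push_cast at this
  rw [hm, zero_mul, add_zero] at this
  rw [h1, this]

lemma mod_small_aux {n a : ℕ} (h : a < 2 * n) :
    a % n = if a < n then a else a - n := by
  split_ifs with h'
  · exact Nat.mod_eq_of_lt h'
  · rw [Nat.mod_eq_sub_mod (le_of_not_gt h'), Nat.mod_eq_of_lt (by omega)]

lemma cycle_adj_cases {m : ℕ} [NeZero m] (hm : 2 ≤ m) {u v : Fin m}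
    (h : (cycleGraph m).Adj u v) : v = u + 1 ∨ v = u + (-1) := by
  rw [cycleGraph_adj'] at h
  have h1 : (1 : Fin m).val = 1 := by
    simp [Fin.val_one', Nat.mod_eq_of_lt hm]
  rcases h with h | h
  · right
    have huv : u - v = 1 := Fin.ext (by rw [h, h1])
    have : v = u - (u - v) := (sub_sub_cancel u v).symm
    rw [huv, sub_eq_add_neg] at this
    exact this
  · left
    have huv : v - u = 1 := Fin.ext (by rw [h, h1])
    have : v = (v - u) + u := (sub_add_cancel v u).symm
    rw [huv, add_comm] at this
    exact this

/-- The column shift function. -/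
def oAux (L j : ℕ) : ℕ := if j / 2 = L - 1 ∧ L % 3 = 1 then 1 else (j / 2) % 3

lemma oAux_property {n L : ℕ} [NeZero n] (hn : 3 ≤ n) (hL : n = 2 * L) (j : Fin n) :
    ¬ ((oAux L ((j + 2 : Fin n)).val : ZMod 3) = (oAux L j.val : ZMod 3)) := by
  intro h
  rw [ZMod.natCast_eq_natCast_iff] at h
  have hmodeq : oAux L ((j + 2 : Fin n)).val % 3 = oAux L j.val % 3 := h
  have hval2 : ((j + 2 : Fin n)).val = if j.val + 2 < n then j.val + 2 else j.val + 2 - n := by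
    rw [Fin.val_add]
    have h2v : ((2 : Fin n)).val = 2 := by
      have h' : ((2 : Fin n)).val = 2 % n := rfl
      rw [h', Nat.mod_eq_of_lt (by omega)]
    rw [h2v]
    exact mod_small_aux (by omega)
  have hj : j.val < n := j.isLt
  rw [hval2] at hmodeq
  unfold oAux at hmodeq
  split_ifs at hmodeq <;> omega

theorem chromatic_square_toroidal_grid_three_k (k n : ℕ) (hk : 1 ≤ k) (hn : 3 ≤ n)
    (hne : Even n) :
    (toroidalGrid (3 * k) n).square.chromaticNumber ≤ 6 := by
  haveI : NeZero (3 * k) := ⟨by omega⟩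
  haveI : NeZero n := ⟨by omega⟩
  obtain ⟨L, hL⟩ : ∃ L, n = 2 * L := by
    obtain ⟨t, ht⟩ := hne; exact ⟨t, by omega⟩
  have h3m : (3 : ℕ) ∣ 3 * k := ⟨k, rfl⟩
  have h2n : (2 : ℕ) ∣ n := ⟨L, hL⟩
  have hP := oAux_property hn hL
  set c3 : Fin (3 * k) → ZMod 3 := fun i => (i.val : ZMod 3) with hc3
  set c2 : Fin n → ZMod 2 := fun j => (j.val : ZMod 2) with hc2
  have hc3add : ∀ a b : Fin (3 * k), c3 (a + b) = c3 a + c3 b :=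
    fun a b => castval_add_aux h3m a b
  have hc2add : ∀ a b : Fin n, c2 (a + b) = c2 a + c2 b :=
    fun a b => castval_add_aux h2n a b
  have hc31 : c3 1 = 1 := by
    show (((1 : Fin (3 * k)).val : ℕ) : ZMod 3) = 1
    rw [Fin.val_one', Nat.mod_eq_of_lt (by omega)]
    norm_num
  have hc3neg1 : c3 (-1) = -1 := by
    have h := hc3add 1 (-1)
    rw [add_neg_cancel, hc31] at h
    have h0 : c3 0 = 0 := by
      show (((0 : Fin (3 * k)).val : ℕ) : ZMod 3) = 0
      simp
    rw [h0] at h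
    linear_combination -h
  have hc21 : c2 1 = 1 := by
    show (((1 : Fin n).val : ℕ) : ZMod 2) = 1
    rw [Fin.val_one', Nat.mod_eq_of_lt (by omega)]
    norm_num
  have hc2neg1 : c2 (-1) = 1 := by
    have h := hc2add 1 (-1)
    rw [add_neg_cancel, hc21] at h
    have h0 : c2 0 = 0 := by
      show (((0 : Fin n).val : ℕ) : ZMod 2) = 0
      simp
    rw [h0] at h
    have h' : c2 (-1) = -1 := by linear_combination -h
    rw [h']
    decide
  set f : Fin (3 * k) × Fin n → ZMod 3 × ZMod 2 :=
    fun p => (c3 p.1 + 2 * (oAux L p.2.val : ZMod 3), c2 p.2) with hf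
  have hparity : ∀ (j : Fin n) (e : Fin n), (e = 1 ∨ e = -1) → c2 (j + e) = c2 j + 1 := by
    rintro j e (rfl | rfl)
    · rw [hc2add, hc21]
    · rw [hc2add, hc2neg1]
  have edge_cases : ∀ u v : Fin (3 * k) × Fin n, (toroidalGrid (3 * k) n).Adj u v →
      (∃ e : Fin (3 * k), (e = 1 ∨ e = -1) ∧ v = (u.1 + e, u.2)) ∨
      (∃ e : Fin n, (e = 1 ∨ e = -1) ∧ v = (u.1, u.2 + e)) := by
    intro u v h
    rw [toroidalGrid, boxProd_adj] at h
    rcases h with ⟨h, h2⟩ | ⟨h, h2⟩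
    · rcases cycle_adj_cases (by omega) h with h' | h'
      · exact Or.inl ⟨1, Or.inl rfl, Prod.ext h' h2.symm⟩
      · exact Or.inl ⟨-1, Or.inr rfl, Prod.ext h' h2.symm⟩
    · rcases cycle_adj_cases (by omega) h with h' | h'
      · exact Or.inr ⟨1, Or.inl rfl, Prod.ext h2.symm h'⟩
      · exact Or.inr ⟨-1, Or.inr rfl, Prod.ext h2.symm h'⟩
  have valid : ∀ u v : Fin (3 * k) × Fin n,
      (toroidalGrid (3 * k) n).square.Adj u v → f u ≠ f v := by
    intro u v hadj
    obtain ⟨hnuv, h⟩ : u ≠ v ∧ ((toroidalGrid (3 * k) n).Adj u v ∨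
        ∃ w, (toroidalGrid (3 * k) n).Adj u w ∧ (toroidalGrid (3 * k) n).Adj w v) := hadj
    have parity_ne : ∀ {a b : Fin (3 * k) × Fin n}, c2 b.2 = c2 a.2 + 1 → f a ≠ f b := by
      intro a b hp heq
      have h2 := congrArg Prod.snd heq
      simp only [hf] at h2
      rw [hp] at h2
      exact one_ne_zero (by linear_combination -h2)
    rcases h with hE | ⟨w, hE1, hE2⟩
    · rcases edge_cases u v hE with ⟨e, he, rfl⟩ | ⟨e, he, rfl⟩
      · intro heq
        have h1 := congrArg Prod.fst heq
        simp only [hf, hc3add] at h1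
        have hce : c3 e = 0 := by linear_combination -h1
        rcases he with rfl | rfl
        · rw [hc31] at hce; exact one_ne_zero hce
        · rw [hc3neg1] at hce; exact one_ne_zero (by linear_combination -hce)
      · exact parity_ne (hparity u.2 e he)
    · rcases edge_cases u w hE1 with ⟨e1, he1, rfl⟩ | ⟨e1, he1, rfl⟩ <;>
        rcases edge_cases _ v hE2 with ⟨e2, he2, rfl⟩ | ⟨e2, he2, rfl⟩
      · -- H, H
        intro heq
        have h1 := congrArg Prod.fst heq
        simp only [hf, hc3add] at h1
        have hce : c3 e1 + c3 e2 = 0 := by linear_combination -h1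
        rcases he1 with rfl | rfl <;> rcases he2 with rfl | rfl
        · rw [hc31] at hce
          exact (by decide : (1 : ZMod 3) + 1 ≠ 0) hce
        · exact hnuv (by
            show u = (u.1 + 1 + -1, u.2)
            rw [add_assoc, add_neg_cancel, add_zero])
        · exact hnuv (by
            show u = (u.1 + -1 + 1, u.2)
            rw [add_assoc, neg_add_cancel, add_zero])
        · rw [hc3neg1] at hce
          exact (by decide : (-1 : ZMod 3) + -1 ≠ 0) hce
      · exact parity_ne (hparity _ e2 he2)
      · exact parity_ne (by
          have := hparity u.2 e1 he1
          simpa using this)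
      · -- V, V
        rcases he1 with rfl | rfl <;> rcases he2 with rfl | rfl
        · have hv2 : u.2 + 1 + 1 = u.2 + 2 := by
            rw [add_assoc, Fin.ext (by simp [Fin.val_add] : ((1 : Fin n) + 1).val = (2 : Fin n).val)]
          intro heq
          have h1 := congrArg Prod.fst heq
          simp only [hf, hv2] at h1
          have hinv : ((oAux L ((u.2 + 2 : Fin n)).val : ℕ) : ZMod 3)
              - (oAux L u.2.val : ZMod 3) = 0 := by
            have h2 : (2 : ZMod 3) * (((oAux L ((u.2 + 2 : Fin n)).val : ℕ) : ZMod 3)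
                - (oAux L u.2.val : ZMod 3)) = 0 := by linear_combination -h1
            rcases mul_eq_zero.mp h2 with h' | h'
            · exact absurd h' (by decide)
            · exact h'
          exact hP u.2 (by linear_combination hinv)
        · exact fun _ => hnuv (by
            show u = (u.1, u.2 + 1 + -1)
            rw [add_assoc, add_neg_cancel, add_zero])
        · exact fun _ => hnuv (by
            show u = (u.1, u.2 + -1 + 1)
            rw [add_assoc, neg_add_cancel, add_zero])
        · have hv2 : u.2 = (u.2 + -1 + -1) + 2 := by
            have h112 : (1 : Fin n) + 1 = 2 := Fin.ext (by simp [Fin.val_add])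
            rw [← h112, add_assoc, add_assoc, ← add_assoc (-1 : Fin n) 1 1,
              neg_add_cancel, zero_add, neg_add_cancel, add_zero]
          intro heq
          have h1 := congrArg Prod.fst heq
          simp only [hf] at h1
          have ho2 : ((oAux L (((u.2 + -1 + -1) + 2 : Fin n)).val : ℕ) : ZMod 3)
              = (oAux L ((u.2 + -1 + -1 : Fin n)).val : ZMod 3) := by
            rw [← hv2]
            have h2 : (2 : ZMod 3) * ((oAux L u.2.val : ZMod 3)
                - ((oAux L ((u.2 + -1 + -1 : Fin n)).val : ℕ) : ZMod 3)) = 0 := by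
              linear_combination h1
            rcases mul_eq_zero.mp h2 with h' | h'
            · exact absurd h' (by decide)
            · linear_combination h'
          exact hP _ ho2
  have C : (toroidalGrid (3 * k) n).square.Coloring (ZMod 3 × ZMod 2) :=
    Coloring.mk f (fun hadj => valid _ _ hadj)
  have hcol : (toroidalGrid (3 * k) n).square.Colorable 6 := by
    have h := C.colorable
    have hcard : Fintype.card (ZMod 3 × ZMod 2) = 6 := by
      rw [Fintype.card_prod, ZMod.card, ZMod.card]
    rwa [hcard] at h
  have h := hcol.chromaticNumber_le
  exact_mod_cast h
end

section
/- For every integer k ≥ 1 and every integer n ≥ 3 with (k,n) ≠ (1,5), the incidence chromatic number of the toroidal grid satisfies χ_i(T_{4k,n}) ≤ 6. -/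
open SimpleGraph

namespace IncProofAux

/-! ### Pattern tables -/

def tabA : ℕ → ℕ → ℕ → Fin 6
  | 0, 0, 0 => 3
  | 0, 0, 1 => 4
  | 0, 0, 2 => 5
  | 0, 0, 3 => 0
  | 0, 1, 0 => 2
  | 0, 1, 1 => 1
  | 0, 1, 2 => 0
  | 0, 1, 3 => 5
  | 0, 2, 0 => 5
  | 0, 2, 1 => 4
  | 0, 2, 2 => 1
  | 0, 2, 3 => 0
  | 0, 3, 0 => 2
  | 0, 3, 1 => 3
  | 0, 3, 2 => 0
  | 0, 3, 3 => 1
  | 1, 0, 0 => 1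
  | 1, 0, 1 => 4
  | 1, 0, 2 => 2
  | 1, 0, 3 => 5
  | 1, 1, 0 => 2
  | 1, 1, 1 => 3
  | 1, 1, 2 => 4
  | 1, 1, 3 => 0
  | 1, 2, 0 => 4
  | 1, 2, 1 => 5
  | 1, 2, 2 => 3
  | 1, 2, 3 => 1
  | 1, 3, 0 => 3
  | 1, 3, 1 => 2
  | 1, 3, 2 => 5
  | 1, 3, 3 => 0
  | 2, 0, 0 => 0
  | 2, 0, 1 => 4
  | 2, 0, 2 => 3
  | 2, 0, 3 => 1
  | 2, 1, 0 => 3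
  | 2, 1, 1 => 2
  | 2, 1, 2 => 1
  | 2, 1, 3 => 4
  | 2, 2, 0 => 4
  | 2, 2, 1 => 5
  | 2, 2, 2 => 0
  | 2, 2, 3 => 2
  | 2, 3, 0 => 2
  | 2, 3, 1 => 3
  | 2, 3, 2 => 1
  | 2, 3, 3 => 5
  | 3, 0, 0 => 2
  | 3, 0, 1 => 5
  | 3, 0, 2 => 1
  | 3, 0, 3 => 4
  | 3, 1, 0 => 3
  | 3, 1, 1 => 0
  | 3, 1, 2 => 4
  | 3, 1, 3 => 1
  | 3, 2, 0 => 1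
  | 3, 2, 1 => 5
  | 3, 2, 2 => 2
  | 3, 2, 3 => 4
  | 3, 3, 0 => 3
  | 3, 3, 1 => 0
  | 3, 3, 2 => 4
  | 3, 3, 3 => 2
  | 4, 0, 0 => 0
  | 4, 0, 1 => 1
  | 4, 0, 2 => 3
  | 4, 0, 3 => 2
  | 4, 1, 0 => 3
  | 4, 1, 1 => 5
  | 4, 1, 2 => 2
  | 4, 1, 3 => 4
  | 4, 2, 0 => 2
  | 4, 2, 1 => 1
  | 4, 2, 2 => 0
  | 4, 2, 3 => 5
  | 4, 3, 0 => 4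
  | 4, 3, 1 => 3
  | 4, 3, 2 => 5
  | 4, 3, 3 => 0
  | 5, 0, 0 => 0
  | 5, 0, 1 => 3
  | 5, 0, 2 => 4
  | 5, 0, 3 => 1
  | 5, 1, 0 => 5
  | 5, 1, 1 => 2
  | 5, 1, 2 => 1
  | 5, 1, 3 => 3
  | 5, 2, 0 => 0
  | 5, 2, 1 => 4
  | 5, 2, 2 => 3
  | 5, 2, 3 => 2
  | 5, 3, 0 => 2
  | 5, 3, 1 => 5
  | 5, 3, 2 => 1
  | 5, 3, 3 => 4
  | _, _, _ => 0

def tabB : ℕ → ℕ → ℕ → Fin 6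
  | 0, 0, 0 => 5
  | 0, 0, 1 => 0
  | 0, 0, 2 => 2
  | 0, 0, 3 => 4
  | 0, 1, 0 => 4
  | 0, 1, 1 => 3
  | 0, 1, 2 => 0
  | 0, 1, 3 => 1
  | 0, 2, 0 => 3
  | 0, 2, 1 => 2
  | 0, 2, 2 => 5
  | 0, 2, 3 => 0
  | 0, 3, 0 => 0
  | 0, 3, 1 => 1
  | 0, 3, 2 => 5
  | 0, 3, 3 => 2
  | 0, 4, 0 => 1
  | 0, 4, 1 => 3
  | 0, 4, 2 => 2
  | 0, 4, 3 => 4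
  | 1, 0, 0 => 0
  | 1, 0, 1 => 1
  | 1, 0, 2 => 3
  | 1, 0, 3 => 2
  | 1, 1, 0 => 3
  | 1, 1, 1 => 5
  | 1, 1, 2 => 2
  | 1, 1, 3 => 4
  | 1, 2, 0 => 2
  | 1, 2, 1 => 1
  | 1, 2, 2 => 4
  | 1, 2, 3 => 5
  | 1, 3, 0 => 4
  | 1, 3, 1 => 0
  | 1, 3, 2 => 3
  | 1, 3, 3 => 1
  | 1, 4, 0 => 5
  | 1, 4, 1 => 2
  | 1, 4, 2 => 0
  | 1, 4, 3 => 3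
  | 2, 0, 0 => 0
  | 2, 0, 1 => 1
  | 2, 0, 2 => 4
  | 2, 0, 3 => 3
  | 2, 1, 0 => 5
  | 2, 1, 1 => 2
  | 2, 1, 2 => 1
  | 2, 1, 3 => 3
  | 2, 2, 0 => 1
  | 2, 2, 1 => 0
  | 2, 2, 2 => 3
  | 2, 2, 3 => 2
  | 2, 3, 0 => 3
  | 2, 3, 1 => 4
  | 2, 3, 2 => 5
  | 2, 3, 3 => 0
  | 2, 4, 0 => 5
  | 2, 4, 1 => 2
  | 2, 4, 2 => 4
  | 2, 4, 3 => 0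
  | 3, 0, 0 => 0
  | 3, 0, 1 => 4
  | 3, 0, 2 => 2
  | 3, 0, 3 => 1
  | 3, 1, 0 => 2
  | 3, 1, 1 => 5
  | 3, 1, 2 => 4
  | 3, 1, 3 => 1
  | 3, 2, 0 => 0
  | 3, 2, 1 => 3
  | 3, 2, 2 => 4
  | 3, 2, 3 => 5
  | 3, 3, 0 => 4
  | 3, 3, 1 => 1
  | 3, 3, 2 => 2
  | 3, 3, 3 => 3
  | 3, 4, 0 => 3
  | 3, 4, 1 => 5
  | 3, 4, 2 => 1
  | 3, 4, 3 => 2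
  | 4, 0, 0 => 0
  | 4, 0, 1 => 2
  | 4, 0, 2 => 3
  | 4, 0, 3 => 4
  | 4, 1, 0 => 2
  | 4, 1, 1 => 5
  | 4, 1, 2 => 3
  | 4, 1, 3 => 4
  | 4, 2, 0 => 4
  | 4, 2, 1 => 0
  | 4, 2, 2 => 1
  | 4, 2, 3 => 3
  | 4, 3, 0 => 1
  | 4, 3, 1 => 2
  | 4, 3, 2 => 0
  | 4, 3, 3 => 5
  | 4, 4, 0 => 5
  | 4, 4, 1 => 4
  | 4, 4, 2 => 0
  | 4, 4, 3 => 3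
  | 5, 0, 0 => 0
  | 5, 0, 1 => 1
  | 5, 0, 2 => 5
  | 5, 0, 3 => 3
  | 5, 1, 0 => 3
  | 5, 1, 1 => 2
  | 5, 1, 2 => 1
  | 5, 1, 3 => 5
  | 5, 2, 0 => 1
  | 5, 2, 1 => 4
  | 5, 2, 2 => 2
  | 5, 2, 3 => 5
  | 5, 3, 0 => 3
  | 5, 3, 1 => 0
  | 5, 3, 2 => 4
  | 5, 3, 3 => 2
  | 5, 4, 0 => 4
  | 5, 4, 1 => 5
  | 5, 4, 2 => 2
  | 5, 4, 3 => 0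
  | 6, 0, 0 => 0
  | 6, 0, 1 => 4
  | 6, 0, 2 => 2
  | 6, 0, 3 => 1
  | 6, 1, 0 => 1
  | 6, 1, 1 => 3
  | 6, 1, 2 => 4
  | 6, 1, 3 => 2
  | 6, 2, 0 => 2
  | 6, 2, 1 => 0
  | 6, 2, 2 => 3
  | 6, 2, 3 => 4
  | 6, 3, 0 => 0
  | 6, 3, 1 => 5
  | 6, 3, 2 => 1
  | 6, 3, 3 => 3
  | 6, 4, 0 => 3
  | 6, 4, 1 => 2
  | 6, 4, 2 => 1
  | 6, 4, 3 => 5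
  | 7, 0, 0 => 0
  | 7, 0, 1 => 2
  | 7, 0, 2 => 3
  | 7, 0, 3 => 4
  | 7, 1, 0 => 4
  | 7, 1, 1 => 1
  | 7, 1, 2 => 5
  | 7, 1, 3 => 3
  | 7, 2, 0 => 3
  | 7, 2, 1 => 0
  | 7, 2, 2 => 1
  | 7, 2, 3 => 5
  | 7, 3, 0 => 5
  | 7, 3, 1 => 2
  | 7, 3, 2 => 4
  | 7, 3, 3 => 0
  | 7, 4, 0 => 1
  | 7, 4, 1 => 3
  | 7, 4, 2 => 4
  | 7, 4, 3 => 0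
  | 8, 0, 0 => 0
  | 8, 0, 1 => 1
  | 8, 0, 2 => 5
  | 8, 0, 3 => 2
  | 8, 1, 0 => 5
  | 8, 1, 1 => 4
  | 8, 1, 2 => 2
  | 8, 1, 3 => 1
  | 8, 2, 0 => 2
  | 8, 2, 1 => 3
  | 8, 2, 2 => 4
  | 8, 2, 3 => 1
  | 8, 3, 0 => 1
  | 8, 3, 1 => 5
  | 8, 3, 2 => 3
  | 8, 3, 3 => 4
  | 8, 4, 0 => 4
  | 8, 4, 1 => 2
  | 8, 4, 2 => 5
  | 8, 4, 3 => 3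
  | 9, 0, 0 => 0
  | 9, 0, 1 => 1
  | 9, 0, 2 => 3
  | 9, 0, 3 => 4
  | 9, 1, 0 => 2
  | 9, 1, 1 => 5
  | 9, 1, 2 => 3
  | 9, 1, 3 => 4
  | 9, 2, 0 => 4
  | 9, 2, 1 => 0
  | 9, 2, 2 => 5
  | 9, 2, 3 => 3
  | 9, 3, 0 => 3
  | 9, 3, 1 => 1
  | 9, 3, 2 => 2
  | 9, 3, 3 => 0
  | 9, 4, 0 => 5
  | 9, 4, 1 => 4
  | 9, 4, 2 => 0
  | 9, 4, 3 => 2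
  | 10, 0, 0 => 0
  | 10, 0, 1 => 1
  | 10, 0, 2 => 2
  | 10, 0, 3 => 3
  | 10, 1, 0 => 2
  | 10, 1, 1 => 5
  | 10, 1, 2 => 1
  | 10, 1, 3 => 3
  | 10, 2, 0 => 0
  | 10, 2, 1 => 4
  | 10, 2, 2 => 1
  | 10, 2, 3 => 5
  | 10, 3, 0 => 1
  | 10, 3, 1 => 3
  | 10, 3, 2 => 5
  | 10, 3, 3 => 2
  | 10, 4, 0 => 5
  | 10, 4, 1 => 0
  | 10, 4, 2 => 3
  | 10, 4, 3 => 4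
  | 11, 0, 0 => 0
  | 11, 0, 1 => 4
  | 11, 0, 2 => 5
  | 11, 0, 3 => 1
  | 11, 1, 0 => 1
  | 11, 1, 1 => 2
  | 11, 1, 2 => 4
  | 11, 1, 3 => 5
  | 11, 2, 0 => 2
  | 11, 2, 1 => 0
  | 11, 2, 2 => 3
  | 11, 2, 3 => 4
  | 11, 3, 0 => 4
  | 11, 3, 1 => 1
  | 11, 3, 2 => 0
  | 11, 3, 3 => 3
  | 11, 4, 0 => 3
  | 11, 4, 1 => 5
  | 11, 4, 2 => 1
  | 11, 4, 3 => 0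
  | 12, 0, 0 => 0
  | 12, 0, 1 => 1
  | 12, 0, 2 => 3
  | 12, 0, 3 => 5
  | 12, 1, 0 => 3
  | 12, 1, 1 => 2
  | 12, 1, 2 => 5
  | 12, 1, 3 => 4
  | 12, 2, 0 => 5
  | 12, 2, 1 => 1
  | 12, 2, 2 => 4
  | 12, 2, 3 => 2
  | 12, 3, 0 => 1
  | 12, 3, 1 => 0
  | 12, 3, 2 => 4
  | 12, 3, 3 => 3
  | 12, 4, 0 => 2
  | 12, 4, 1 => 5
  | 12, 4, 2 => 0
  | 12, 4, 3 => 3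
  | 13, 0, 0 => 0
  | 13, 0, 1 => 1
  | 13, 0, 2 => 2
  | 13, 0, 3 => 4
  | 13, 1, 0 => 2
  | 13, 1, 1 => 3
  | 13, 1, 2 => 1
  | 13, 1, 3 => 5
  | 13, 2, 0 => 3
  | 13, 2, 1 => 4
  | 13, 2, 2 => 0
  | 13, 2, 3 => 5
  | 13, 3, 0 => 1
  | 13, 3, 1 => 2
  | 13, 3, 2 => 5
  | 13, 3, 3 => 4
  | 13, 4, 0 => 5
  | 13, 4, 1 => 0
  | 13, 4, 2 => 4
  | 13, 4, 3 => 2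
  | 14, 0, 0 => 0
  | 14, 0, 1 => 2
  | 14, 0, 2 => 3
  | 14, 0, 3 => 5
  | 14, 1, 0 => 2
  | 14, 1, 1 => 1
  | 14, 1, 2 => 4
  | 14, 1, 3 => 3
  | 14, 2, 0 => 4
  | 14, 2, 1 => 0
  | 14, 2, 2 => 1
  | 14, 2, 3 => 3
  | 14, 3, 0 => 1
  | 14, 3, 1 => 2
  | 14, 3, 2 => 0
  | 14, 3, 3 => 3
  | 14, 4, 0 => 4
  | 14, 4, 1 => 5
  | 14, 4, 2 => 3
  | 14, 4, 3 => 0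
  | 15, 0, 0 => 0
  | 15, 0, 1 => 2
  | 15, 0, 2 => 4
  | 15, 0, 3 => 3
  | 15, 1, 0 => 2
  | 15, 1, 1 => 1
  | 15, 1, 2 => 5
  | 15, 1, 3 => 4
  | 15, 2, 0 => 1
  | 15, 2, 1 => 0
  | 15, 2, 2 => 5
  | 15, 2, 3 => 4
  | 15, 3, 0 => 0
  | 15, 3, 1 => 2
  | 15, 3, 2 => 4
  | 15, 3, 3 => 5
  | 15, 4, 0 => 5
  | 15, 4, 1 => 3
  | 15, 4, 2 => 1
  | 15, 4, 3 => 4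
  | 16, 0, 0 => 0
  | 16, 0, 1 => 2
  | 16, 0, 2 => 1
  | 16, 0, 3 => 4
  | 16, 1, 0 => 2
  | 16, 1, 1 => 5
  | 16, 1, 2 => 3
  | 16, 1, 3 => 1
  | 16, 2, 0 => 1
  | 16, 2, 1 => 0
  | 16, 2, 2 => 3
  | 16, 2, 3 => 5
  | 16, 3, 0 => 2
  | 16, 3, 1 => 4
  | 16, 3, 2 => 3
  | 16, 3, 3 => 0
  | 16, 4, 0 => 3
  | 16, 4, 1 => 5
  | 16, 4, 2 => 0
  | 16, 4, 3 => 1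
  | 17, 0, 0 => 0
  | 17, 0, 1 => 1
  | 17, 0, 2 => 3
  | 17, 0, 3 => 2
  | 17, 1, 0 => 2
  | 17, 1, 1 => 5
  | 17, 1, 2 => 4
  | 17, 1, 3 => 3
  | 17, 2, 0 => 0
  | 17, 2, 1 => 1
  | 17, 2, 2 => 4
  | 17, 2, 3 => 3
  | 17, 3, 0 => 3
  | 17, 3, 1 => 2
  | 17, 3, 2 => 5
  | 17, 3, 3 => 1
  | 17, 4, 0 => 5
  | 17, 4, 1 => 0
  | 17, 4, 2 => 4
  | 17, 4, 3 => 2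
  | 18, 0, 0 => 0
  | 18, 0, 1 => 1
  | 18, 0, 2 => 5
  | 18, 0, 3 => 3
  | 18, 1, 0 => 5
  | 18, 1, 1 => 4
  | 18, 1, 2 => 1
  | 18, 1, 3 => 2
  | 18, 2, 0 => 1
  | 18, 2, 1 => 0
  | 18, 2, 2 => 2
  | 18, 2, 3 => 4
  | 18, 3, 0 => 2
  | 18, 3, 1 => 3
  | 18, 3, 2 => 0
  | 18, 3, 3 => 4
  | 18, 4, 0 => 4
  | 18, 4, 1 => 5
  | 18, 4, 2 => 3
  | 18, 4, 3 => 0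
  | _, _, _ => 0


/-- Column type sequence for the main case (`n ≠ 5`). -/
def typA (n j : ℕ) : ℕ :=
  if j < 4 * (n % 3) then
    (if j % 4 = 0 then 0 else if j % 4 = 1 then 3 else if j % 4 = 2 then 4 else 5)
  else (j - 4 * (n % 3)) % 3

/-- Column type sequence for the `n = 5` case. -/
def typB (k i : ℕ) : ℕ :=
  if i < 12 * (k % 2) then i % 12
  else if (i - 12 * (k % 2)) % 8 = 0 then 0 else 11 + (i - 12 * (k % 2)) % 8

def okA (a b : ℕ) : Prop :=
  (a = 0 ∧ b = 1) ∨ (a = 1 ∧ b = 2) ∨ (a = 2 ∧ b = 0) ∨ (a = 0 ∧ b = 3) ∨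
  (a = 3 ∧ b = 4) ∨ (a = 4 ∧ b = 5) ∨ (a = 5 ∧ b = 0)

def okB (a b : ℕ) : Prop :=
  (a ≤ 10 ∧ b = a + 1) ∨ (a = 11 ∧ b = 0) ∨ (a = 0 ∧ b = 12) ∨
  (12 ≤ a ∧ a ≤ 17 ∧ b = a + 1) ∨ (a = 18 ∧ b = 0)

instance : ∀ a b, Decidable (okA a b) := fun _ _ => by unfold okA; infer_instance
instance : ∀ a b, Decidable (okB a b) := fun _ _ => by unfold okB; infer_instance

lemma typA_lt (n j : ℕ) : typA n j < 6 := by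
  unfold typA; split_ifs <;> omega

lemma typB_lt (k i : ℕ) : typB k i < 19 := by
  unfold typB; split_ifs <;> omega

lemma typA_consec {n j : ℕ} (hn : 3 ≤ n) (h5 : n ≠ 5) (hj : j < n) :
    okA (typA n j) (typA n ((j + 1) % n)) := by
  have htn : 4 * (n % 3) ≤ n := by omega
  have hmod : (j + 1) % n = if j + 1 = n then 0 else j + 1 := by
    split_ifs with hc
    · simp [hc]
    · exact Nat.mod_eq_of_lt (by omega)
  rw [hmod]
  unfold typA okA
  split_ifs <;> omega

lemma typB_consec {k i : ℕ} (hk : 2 ≤ k) (hi : i < 4 * k) :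
    okB (typB k i) (typB k ((i + 1) % (4 * k))) := by
  have htn : 12 * (k % 2) ≤ 4 * k := by omega
  have h8 : (4 * k - 12 * (k % 2)) % 8 = 0 := by omega
  have hmod : (i + 1) % (4 * k) = if i + 1 = 4 * k then 0 else i + 1 := by
    split_ifs with hc
    · simp [hc]
    · exact Nat.mod_eq_of_lt (by omega)
  rw [hmod]
  unfold typB okB
  split_ifs <;> omega

/-! ### Decidable table facts -/

lemma factA1 : ∀ a < 6, ∀ r < 4, ∀ d < 4, ∀ d' < 4, d = d' ∨ tabA a r d ≠ tabA a r d' := by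
  decide

lemma factA2 : ∀ a < 6, ∀ r < 4, ∀ d < 4, tabA a r 0 ≠ tabA a ((r + 1) % 4) d := by decide

lemma factA3 : ∀ a < 6, ∀ r < 4, ∀ d < 4, tabA a r 1 ≠ tabA a ((r + 3) % 4) d := by decide

lemma factA4 : ∀ a < 6, ∀ b < 6, okA a b → ∀ r < 4, ∀ d < 4, tabA a r 3 ≠ tabA b r d := by
  decide

lemma factA5 : ∀ a < 6, ∀ b < 6, okA a b → ∀ r < 4, ∀ d < 4, tabA b r 2 ≠ tabA a r d := by
  decide

lemma factB1 : ∀ a < 19, ∀ r < 5, ∀ d < 4, ∀ d' < 4, d = d' ∨ tabB a r d ≠ tabB a r d' := by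
  decide

lemma factB2 : ∀ a < 19, ∀ r < 5, ∀ d < 4, tabB a r 0 ≠ tabB a ((r + 1) % 5) d := by decide

lemma factB3 : ∀ a < 19, ∀ r < 5, ∀ d < 4, tabB a r 1 ≠ tabB a ((r + 4) % 5) d := by decide

lemma factB4 : ∀ a < 19, ∀ b < 19, okB a b → ∀ r < 5, ∀ d < 4, tabB a r 3 ≠ tabB b r d := by
  decide

lemma factB5 : ∀ a < 19, ∀ b < 19, okB a b → ∀ r < 5, ∀ d < 4, tabB b r 2 ≠ tabB a r d := by
  decide

/-! ### Fin helpers -/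

lemma val_add_one {m : ℕ} [NeZero m] (hm : 2 ≤ m) (x : Fin m) : (x + 1).val = (x.val + 1) % m := by
  obtain ⟨m', rfl⟩ : ∃ m', m = m' + 2 := ⟨m - 2, by omega⟩
  simp [Fin.add_def]

lemma ne_add_one {m : ℕ} [NeZero m] (hm : 3 ≤ m) (x : Fin m) : x ≠ x + 1 := by
  intro h
  have h1 : x.val = (x.val + 1) % m := by
    conv_lhs => rw [h]
    exact val_add_one (by omega) x
  have hx := x.is_lt
  rcases Nat.lt_or_ge (x.val + 1) m with hc | hc
  · rw [Nat.mod_eq_of_lt hc] at h1; omega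
  · have he : x.val + 1 = m := by omega
    rw [he, Nat.mod_self] at h1; omega

lemma ne_add_two {m : ℕ} [NeZero m] (hm : 3 ≤ m) (x : Fin m) : x ≠ x + 1 + 1 := by
  intro h
  have h1 : x.val = ((x.val + 1) % m + 1) % m := by
    conv_lhs => rw [h]
    rw [val_add_one (by omega) (x + 1), val_add_one (by omega) x]
  have hx := x.is_lt
  rcases Nat.lt_or_ge (x.val + 1) m with hc | hc
  · rw [Nat.mod_eq_of_lt hc] at h1
    rcases Nat.lt_or_ge (x.val + 2) m with hc2 | hc2
    · rw [Nat.mod_eq_of_lt (by omega)] at h1; omega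
    · have he : x.val + 1 + 1 = m := by omega
      rw [he, Nat.mod_self] at h1; omega
  · have he : x.val + 1 = m := by omega
    rw [he, Nat.mod_self] at h1
    rw [Nat.mod_eq_of_lt (by omega)] at h1; omega

lemma cyc_adj {m : ℕ} [NeZero m] (hm : 3 ≤ m) {u v : Fin m} :
    (cycleGraph m).Adj u v ↔ v = u + 1 ∨ u = v + 1 := by
  obtain ⟨m', rfl⟩ : ∃ m', m = m' + 2 := ⟨m - 2, by omega⟩
  rw [cycleGraph_adj]
  constructor
  · rintro (h | h)
    · exact Or.inr ((sub_eq_iff_eq_add.mp h).trans (add_comm _ _))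
    · exact Or.inl ((sub_eq_iff_eq_add.mp h).trans (add_comm _ _))
  · rintro (h | h)
    · right; rw [h]; exact add_sub_cancel_left u 1
    · left; rw [h]; exact add_sub_cancel_left v 1

/-! ### The arc coloring -/

def dir4 {m n : ℕ} [NeZero m] [NeZero n] (p q r s : ℕ) (v w : Fin m × Fin n) : ℕ :=
  if v.1 = w.1 then (if w.2 = v.2 + 1 then p else q)
  else (if w.1 = v.1 + 1 then r else s)

lemma dir4_lt {m n : ℕ} [NeZero m] [NeZero n] {p q r s : ℕ} (hp : p < 4) (hq : q < 4) (hr : r < 4) (hs : s < 4)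
    (v w : Fin m × Fin n) : dir4 p q r s v w < 4 := by
  unfold dir4; split_ifs <;> assumption

lemma dir4_right {m n : ℕ} [NeZero m] [NeZero n] {p q r s : ℕ} {v w : Fin m × Fin n}
    (h1 : v.1 = w.1) (h2 : w.2 = v.2 + 1) : dir4 p q r s v w = p := by
  unfold dir4; rw [if_pos h1, if_pos h2]

lemma dir4_left {m n : ℕ} [NeZero m] [NeZero n] {p q r s : ℕ} {v w : Fin m × Fin n} (hn : 3 ≤ n)
    (h1 : v.1 = w.1) (h2 : v.2 = w.2 + 1) : dir4 p q r s v w = q := by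
  unfold dir4; rw [if_pos h1, if_neg]
  intro hc
  exact ne_add_two hn w.2 (by rw [← h2, ← hc])

lemma dir4_up {m n : ℕ} [NeZero m] [NeZero n] {p q r s : ℕ} {v w : Fin m × Fin n} (hm : 3 ≤ m)
    (h1 : w.1 = v.1 + 1) (h2 : w.2 = v.2) : dir4 p q r s v w = r := by
  unfold dir4; rw [if_neg, if_pos h1]
  intro hc
  exact ne_add_one hm v.1 (hc.trans h1)

lemma dir4_down {m n : ℕ} [NeZero m] [NeZero n] {p q r s : ℕ} {v w : Fin m × Fin n} (hm : 3 ≤ m)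
    (h1 : v.1 = w.1 + 1) (h2 : w.2 = v.2) : dir4 p q r s v w = s := by
  unfold dir4; rw [if_neg, if_neg]
  · intro hc
    exact ne_add_two hm w.1 (by rw [← h1, ← hc])
  · intro hc
    exact ne_add_one hm w.1 (by rw [← h1, ← hc])

def arcC (k n : ℕ) [NeZero (4 * k)] [NeZero n] (v w : Fin (4 * k) × Fin n) : Fin 6 :=
  if n = 5 then tabB (typB k v.1.val) (v.2.val % 5) (dir4 0 1 3 2 v w)
  else tabA (typA n v.2.val) (v.1.val % 4) (dir4 3 2 0 1 v w)

lemma dir4_ne {m n : ℕ} [NeZero m] [NeZero n] {p q r s : ℕ} (hm : 3 ≤ m) (hn : 3 ≤ n) {v w w' : Fin m × Fin n}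
    (hpq : p ≠ q) (hpr : p ≠ r) (hps : p ≠ s) (hqr : q ≠ r) (hqs : q ≠ s) (hrs : r ≠ s)
    (hw : (w.1 = v.1 + 1 ∨ v.1 = w.1 + 1) ∧ v.2 = w.2 ∨
          (w.2 = v.2 + 1 ∨ v.2 = w.2 + 1) ∧ v.1 = w.1)
    (hw' : (w'.1 = v.1 + 1 ∨ v.1 = w'.1 + 1) ∧ v.2 = w'.2 ∨
           (w'.2 = v.2 + 1 ∨ v.2 = w'.2 + 1) ∧ v.1 = w'.1)
    (hne : w ≠ w') : dir4 p q r s v w ≠ dir4 p q r s v w' := by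
  rcases hw with ⟨hA | hA, hB⟩ | ⟨hA | hA, hB⟩ <;>
    rcases hw' with ⟨hA' | hA', hB'⟩ | ⟨hA' | hA', hB'⟩
  · exact absurd (Prod.ext_iff.mpr ⟨hA.trans hA'.symm, hB.symm.trans hB'⟩) hne
  · rw [dir4_up hm hA hB.symm, dir4_down hm hA' hB'.symm]; exact hrs
  · rw [dir4_up hm hA hB.symm, dir4_right hB' hA']; exact hpr.symm
  · rw [dir4_up hm hA hB.symm, dir4_left hn hB' hA']; exact hqr.symm
  · rw [dir4_down hm hA hB.symm, dir4_up hm hA' hB'.symm]; exact hrs.symm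
  · refine absurd (Prod.ext_iff.mpr ⟨?_, hB.symm.trans hB'⟩) hne
    have : w.1 + 1 = w'.1 + 1 := hA.symm.trans hA'
    exact add_right_cancel this
  · rw [dir4_down hm hA hB.symm, dir4_right hB' hA']; exact hps.symm
  · rw [dir4_down hm hA hB.symm, dir4_left hn hB' hA']; exact hqs.symm
  · rw [dir4_right hB hA, dir4_up hm hA' hB'.symm]; exact hpr
  · rw [dir4_right hB hA, dir4_down hm hA' hB'.symm]; exact hps
  · exact absurd (Prod.ext_iff.mpr ⟨hB.symm.trans hB', hA.trans hA'.symm⟩) hne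
  · rw [dir4_right hB hA, dir4_left hn hB' hA']; exact hpq
  · rw [dir4_left hn hB hA, dir4_up hm hA' hB'.symm]; exact hqr
  · rw [dir4_left hn hB hA, dir4_down hm hA' hB'.symm]; exact hqs
  · rw [dir4_left hn hB hA, dir4_right hB' hA']; exact hpq.symm
  · refine absurd (Prod.ext_iff.mpr ⟨hB.symm.trans hB', ?_⟩) hne
    have : w.2 + 1 = w'.2 + 1 := hA.symm.trans hA'
    exact add_right_cancel this

lemma h1main (k n : ℕ) [NeZero (4 * k)] [NeZero n] (hk : 1 ≤ k) (hn : 3 ≤ n) :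
    ∀ v w w' : Fin (4 * k) × Fin n, (toroidalGrid (4 * k) n).Adj v w →
      (toroidalGrid (4 * k) n).Adj v w' → w ≠ w' → arcC k n v w ≠ arcC k n v w' := by
  intro v w w' ha ha' hne
  have hm : 3 ≤ 4 * k := by omega
  rw [toroidalGrid, boxProd_adj, cyc_adj hm, cyc_adj hn] at ha ha'
  unfold arcC
  split_ifs with h5
  · exact (factB1 _ (typB_lt k v.1.val) _ (Nat.mod_lt _ (by norm_num)) _
      (dir4_lt (by norm_num) (by norm_num) (by norm_num) (by norm_num) v w) _
      (dir4_lt (by norm_num) (by norm_num) (by norm_num) (by norm_num) v w')).resolve_left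
      (dir4_ne hm hn (by norm_num) (by norm_num) (by norm_num) (by norm_num) (by norm_num)
        (by norm_num) ha ha' hne)
  · exact (factA1 _ (typA_lt n v.2.val) _ (Nat.mod_lt _ (by norm_num)) _
      (dir4_lt (by norm_num) (by norm_num) (by norm_num) (by norm_num) v w) _
      (dir4_lt (by norm_num) (by norm_num) (by norm_num) (by norm_num) v w')).resolve_left
      (dir4_ne hm hn (by norm_num) (by norm_num) (by norm_num) (by norm_num) (by norm_num)
        (by norm_num) ha ha' hne)

lemma h2main (k n : ℕ) [NeZero (4 * k)] [NeZero n] (hk : 1 ≤ k) (hn : 3 ≤ n) (hex : ¬(k = 1 ∧ n = 5)) :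
    ∀ v w x : Fin (4 * k) × Fin n, (toroidalGrid (4 * k) n).Adj v w →
      (toroidalGrid (4 * k) n).Adj w x → arcC k n v w ≠ arcC k n w x := by
  intro v w x ha hb
  have hm : 3 ≤ 4 * k := by omega
  have hdvd : (4 : ℕ) ∣ 4 * k := ⟨k, rfl⟩
  rw [toroidalGrid, boxProd_adj, cyc_adj hm, cyc_adj hn] at ha hb
  unfold arcC
  split_ifs with h5
  · -- branch B : n = 5
    subst h5
    have hk2 : 2 ≤ k := by omega
    have hd : dir4 0 1 3 2 w x < 4 :=
      dir4_lt (by norm_num) (by norm_num) (by norm_num) (by norm_num) w x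
    have hv2 := v.2.is_lt
    have hw2 := w.2.is_lt
    rcases ha with ⟨hA | hA, hB⟩ | ⟨hA | hA, hB⟩
    · -- row up : w.1 = v.1 + 1
      rw [dir4_up hm hA hB.symm]
      have ht : okB (typB k v.1.val) (typB k w.1.val) := by
        have : w.1.val = (v.1.val + 1) % (4 * k) := by rw [hA]; exact val_add_one (by omega) v.1
        rw [this]; exact typB_consec hk2 v.1.is_lt
      rw [← hB]
      exact factB4 _ (typB_lt k v.1.val) _ (typB_lt k w.1.val) ht _
        (Nat.mod_lt _ (by norm_num)) _ hd
    · -- row down : v.1 = w.1 + 1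
      rw [dir4_down hm hA hB.symm]
      have ht : okB (typB k w.1.val) (typB k v.1.val) := by
        have : v.1.val = (w.1.val + 1) % (4 * k) := by rw [hA]; exact val_add_one (by omega) w.1
        rw [this]; exact typB_consec hk2 w.1.is_lt
      rw [← hB]
      exact factB5 _ (typB_lt k w.1.val) _ (typB_lt k v.1.val) ht _
        (Nat.mod_lt _ (by norm_num)) _ hd
    · -- col up : w.2 = v.2 + 1
      rw [dir4_right hB hA, ← hB]
      have hval : w.2.val = (v.2.val + 1) % 5 := by rw [hA]; exact val_add_one (by omega) v.2
      have : w.2.val % 5 = (v.2.val % 5 + 1) % 5 := by omega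
      rw [this]
      exact factB2 _ (typB_lt k v.1.val) _ (Nat.mod_lt _ (by norm_num)) _ hd
    · -- col down : v.2 = w.2 + 1
      rw [dir4_left hn hB hA, ← hB]
      have hval : v.2.val = (w.2.val + 1) % 5 := by rw [hA]; exact val_add_one (by omega) w.2
      have : w.2.val % 5 = (v.2.val % 5 + 4) % 5 := by omega
      rw [this]
      exact factB3 _ (typB_lt k v.1.val) _ (Nat.mod_lt _ (by norm_num)) _ hd
  · -- branch A : n ≠ 5
    have hd : dir4 3 2 0 1 w x < 4 :=
      dir4_lt (by norm_num) (by norm_num) (by norm_num) (by norm_num) w x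
    have hv1 := v.1.is_lt
    have hw1 := w.1.is_lt
    rcases ha with ⟨hA | hA, hB⟩ | ⟨hA | hA, hB⟩
    · -- row up : w.1 = v.1 + 1
      rw [dir4_up hm hA hB.symm, ← hB]
      have hval : w.1.val = (v.1.val + 1) % (4 * k) := by
        rw [hA]; exact val_add_one (by omega) v.1
      have : w.1.val % 4 = (v.1.val % 4 + 1) % 4 := by
        rw [hval, Nat.mod_mod_of_dvd _ hdvd]; omega
      rw [this]
      exact factA2 _ (typA_lt n v.2.val) _ (Nat.mod_lt _ (by norm_num)) _ hd
    · -- row down : v.1 = w.1 + 1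
      rw [dir4_down hm hA hB.symm, ← hB]
      have hval : v.1.val = (w.1.val + 1) % (4 * k) := by
        rw [hA]; exact val_add_one (by omega) w.1
      have : w.1.val % 4 = (v.1.val % 4 + 3) % 4 := by
        have h1 : v.1.val % 4 = (w.1.val + 1) % 4 := by
          rw [hval]; exact Nat.mod_mod_of_dvd _ hdvd
        omega
      rw [this]
      exact factA3 _ (typA_lt n v.2.val) _ (Nat.mod_lt _ (by norm_num)) _ hd
    · -- col right : w.2 = v.2 + 1
      rw [dir4_right hB hA, ← hB]
      have ht : okA (typA n v.2.val) (typA n w.2.val) := by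
        have : w.2.val = (v.2.val + 1) % n := by rw [hA]; exact val_add_one (by omega) v.2
        rw [this]; exact typA_consec hn h5 v.2.is_lt
      exact factA4 _ (typA_lt n v.2.val) _ (typA_lt n w.2.val) ht _
        (Nat.mod_lt _ (by norm_num)) _ hd
    · -- col left : v.2 = w.2 + 1
      rw [dir4_left hn hB hA, ← hB]
      have ht : okA (typA n w.2.val) (typA n v.2.val) := by
        have : v.2.val = (w.2.val + 1) % n := by rw [hA]; exact val_add_one (by omega) w.2
        rw [this]; exact typA_consec hn h5 w.2.is_lt
      exact factA5 _ (typA_lt n w.2.val) _ (typA_lt n v.2.val) ht _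
        (Nat.mod_lt _ (by norm_num)) _ hd

lemma key {V : Type*} (G : SimpleGraph V) (c : V → V → Fin 6)
    (h1 : ∀ v w w', G.Adj v w → G.Adj v w' → w ≠ w' → c v w ≠ c v w')
    (h2 : ∀ v w x, G.Adj v w → G.Adj w x → c v w ≠ c w x) :
    (incidenceGraph G).Colorable 6 := by
  refine ⟨SimpleGraph.Coloring.mk (fun i => c i.1.1 (Sym2.Mem.other i.2.2)) ?_⟩
  rintro ⟨⟨v, e⟩, he, hv⟩ ⟨⟨w, f⟩, hf, hw⟩ hadj
  obtain ⟨hne, hcase⟩ : _ ∧ _ := hadj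
  simp only at hcase ⊢
  have hx : s(v, Sym2.Mem.other hv) = e := Sym2.other_spec hv
  have hy : s(w, Sym2.Mem.other hw) = f := Sym2.other_spec hw
  set x := Sym2.Mem.other hv with hxd
  set y := Sym2.Mem.other hw with hyd
  have hadjvx : G.Adj v x := by rw [← SimpleGraph.mem_edgeSet, hx]; exact he
  have hadjwy : G.Adj w y := by rw [← SimpleGraph.mem_edgeSet, hy]; exact hf
  rcases hcase with hvw | hef | hs | hs
  · subst hvw
    by_cases hxy : x = y
    · exact (hne (Subtype.ext (Prod.ext_iff.mpr
        ⟨rfl, hx.symm.trans ((hxy ▸ hy : s(v, x) = f))⟩))).elim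
    · exact h1 v x y hadjvx hadjwy hxy
  · have hef0 := hef
    rw [← hx, ← hy] at hef
    rcases Sym2.eq_iff.mp hef with ⟨hvw, hxy⟩ | ⟨hvy, hxw⟩
    · exact (hne (Subtype.ext (Prod.ext_iff.mpr ⟨hvw, hef0⟩))).elim
    · rw [hxw, ← hvy]
      exact h2 v w v (hxw ▸ hadjvx) (hxw ▸ hadjvx).symm
  · rw [← hx] at hs
    rcases Sym2.eq_iff.mp hs with ⟨-, hwx⟩ | ⟨hvx, hwv⟩
    · rw [← hwx]
      exact h2 v w y (hwx ▸ hadjvx) hadjwy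
    · rw [← hvx] at hadjvx
      exact absurd hadjvx (G.irrefl)
  · have hvw : G.Adj v w := by rw [← SimpleGraph.mem_edgeSet, hs]; exact hf
    rw [← hy] at hs
    rcases Sym2.eq_iff.mp hs with ⟨hvw', hwy⟩ | ⟨hvy, -⟩
    · rw [← hwy] at hadjwy
      exact absurd hadjwy (G.irrefl)
    · rw [← hvy]
      exact (h2 w v x hvw.symm hadjvx).symm

end IncProofAux

theorem incidence_chromatic_toroidal_grid_four_k (k n : ℕ) (hk : 1 ≤ k) (hn : 3 ≤ n)
    (h : ¬(k = 1 ∧ n = 5)) :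
    incidenceChromaticNumber (toroidalGrid (4 * k) n) ≤ 6 := by
  haveI : NeZero (4 * k) := ⟨by omega⟩
  haveI : NeZero n := ⟨by omega⟩
  have hcol : (incidenceGraph (toroidalGrid (4 * k) n)).Colorable 6 :=
    IncProofAux.key _ (IncProofAux.arcC k n)
      (IncProofAux.h1main k n hk hn) (IncProofAux.h2main k n hk hn h)
  have hle := hcol.chromaticNumber_le
  rw [incidenceChromaticNumber]
  exact le_trans hle (by norm_num)
end
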